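/- In every 2-page book embedding of the double ladder of length ℓ, for each i ∈ {0,…,ℓ−1} the spine order contains one of the following two patterns: the vertices u_i, v_i, w_i occupy three consecutive positions in this order and the vertices w_{i+1}, v_{i+1}, u_{i+1} occupy three consecutive positions in this order, with all of u_i, v_i, w_i preceding all of u_{i+1}, v_{i+1}, w_{i+1}; or the vertices w_i, v_i, u_i occupy three consecutive positions in this order and the vertices u_{i+1}, v_{i+1}, w_{i+1} occupy three consecutive positions in this order, with all of u_i, v_i, w_i preceding all of u_{i+1}, v_{i+1}, w_{i+1}. -/
import Mathlib


/-- A 2-page book embedding of the DAG on vertex type `V` with edge relation `E`: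
a spine position function (an injective topological order) together with an
assignment of edges to two pages such that no two same-page edges cross. -/
structure TwoPageEmbedding (V : Type*) (E : V → V → Prop) where
  pos : V → ℕ
  pos_inj : Function.Injective pos
  topo : ∀ ⦃a b : V⦄, E a b → pos a < pos b
  page : V → V → Bool
  no_cross : ∀ a b c d : V, E a b → E c d → page a b = page c d →
    ¬ (pos a < pos c ∧ pos c < pos b ∧ pos b < pos d)

/-- `a` and `b` occupy consecutive spine positions, with `a` before `b`. -/
def TwoPageEmbedding.Consec {V : Type*} {E : V → V → Prop}
    (emb : TwoPageEmbedding V E) (a b : V) : Prop :=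
  emb.pos a < emb.pos b ∧
    ∀ x : V, ¬ (emb.pos a < emb.pos x ∧ emb.pos x < emb.pos b)

/-- `a` and `b` are spine-consecutive: no vertex lies strictly between them. -/
def TwoPageEmbedding.SpineConsec {V : Type*} {E : V → V → Prop}
    (emb : TwoPageEmbedding V E) (a b : V) : Prop :=
  (∀ x : V, ¬ (emb.pos a < emb.pos x ∧ emb.pos x < emb.pos b)) ∧
  (∀ x : V, ¬ (emb.pos b < emb.pos x ∧ emb.pos x < emb.pos a))

/-- Names of the vertices of a double ladder. -/
inductive DLV : Type
  | s1 | s2 | t1 | t2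
  | u (i : ℕ) | v (i : ℕ) | w (i : ℕ)

/-- Validity of a vertex name for the double ladder of length `ℓ`. -/
def DLV.valid (ℓ : ℕ) : DLV → Prop
  | .u i => i ≤ ℓ
  | .v i => i ≤ ℓ
  | .w i => i ≤ ℓ
  | _ => True

/-- The vertex set of the double ladder of length `ℓ`. -/
def DLVert (ℓ : ℕ) : Type := {x : DLV // DLV.valid ℓ x}

def DLs1 (ℓ : ℕ) : DLVert ℓ := ⟨DLV.s1, trivial⟩
def DLs2 (ℓ : ℕ) : DLVert ℓ := ⟨DLV.s2, trivial⟩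
def DLt1 (ℓ : ℕ) : DLVert ℓ := ⟨DLV.t1, trivial⟩
def DLt2 (ℓ : ℕ) : DLVert ℓ := ⟨DLV.t2, trivial⟩
def DLu (ℓ i : ℕ) (h : i ≤ ℓ) : DLVert ℓ := ⟨DLV.u i, h⟩
def DLv (ℓ i : ℕ) (h : i ≤ ℓ) : DLVert ℓ := ⟨DLV.v i, h⟩
def DLw (ℓ i : ℕ) (h : i ≤ ℓ) : DLVert ℓ := ⟨DLV.w i, h⟩

/-- The edges of the double ladder of length `ℓ` (on vertex names). -/
inductive DLEdgeV (ℓ : ℕ) : DLV → DLV → Prop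
  | s1u : DLEdgeV ℓ .s1 (.u 0)
  | s1v : DLEdgeV ℓ .s1 (.v 0)
  | s2v : DLEdgeV ℓ .s2 (.v 0)
  | s2w : DLEdgeV ℓ .s2 (.w 0)
  | ut1 : DLEdgeV ℓ (.u ℓ) .t1
  | vt1 : DLEdgeV ℓ (.v ℓ) .t1
  | vt2 : DLEdgeV ℓ (.v ℓ) .t2
  | wt2 : DLEdgeV ℓ (.w ℓ) .t2
  | uu {i : ℕ} : i < ℓ → DLEdgeV ℓ (.u i) (.u (i + 1))
  | vu {i : ℕ} : i < ℓ → DLEdgeV ℓ (.v i) (.u (i + 1))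
  | vv {i : ℕ} : i < ℓ → DLEdgeV ℓ (.v i) (.v (i + 1))
  | wv {i : ℕ} : i < ℓ → DLEdgeV ℓ (.w i) (.v (i + 1))
  | ww {i : ℕ} : i < ℓ → DLEdgeV ℓ (.w i) (.w (i + 1))

/-- The edge relation of the double ladder of length `ℓ`. -/
def DLEdge (ℓ : ℕ) (a b : DLVert ℓ) : Prop := DLEdgeV ℓ a.val b.val

/-- Every vertex of the `i`-th triple precedes every vertex of the `j`-th triple
in the spine order of `emb`. -/
def TripleBefore {ℓ : ℕ} (emb : TwoPageEmbedding (DLVert ℓ) (DLEdge ℓ))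
    (i j : ℕ) : Prop :=
  ∀ x y : DLVert ℓ,
    (x.val = DLV.u i ∨ x.val = DLV.v i ∨ x.val = DLV.w i) →
    (y.val = DLV.u j ∨ y.val = DLV.v j ∨ y.val = DLV.w j) →
    emb.pos x < emb.pos y

namespace DLP

lemma bool3 {a b c : Bool} (h1 : a ≠ b) (h2 : b ≠ c) (h3 : c ≠ a) : False := by
  cases a <;> cases b <;> cases c <;> first | exact h1 rfl | exact h2 rfl | exact h3 rfl

lemma bool5 {a b c d e : Bool} (h1 : a ≠ b) (h2 : b ≠ c) (h3 : c ≠ d)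
    (h4 : d ≠ e) (h5 : e ≠ a) : False := by
  cases a <;> cases b <;> cases c <;> cases d <;> cases e <;>
    first | exact h1 rfl | exact h2 rfl | exact h3 rfl | exact h4 rfl | exact h5 rfl

variable {V : Type*} {E : V → V → Prop} (emb : TwoPageEmbedding V E)

lemma cne {a b c d : V} (hab : E a b) (hcd : E c d) (h1 : emb.pos a < emb.pos c)
    (h2 : emb.pos c < emb.pos b) (h3 : emb.pos b < emb.pos d) :
    emb.page a b ≠ emb.page c d :=
  fun h => emb.no_cross a b c d hab hcd h ⟨h1, h2, h3⟩

lemma exists_min (S : Set V) (hS : S.Nonempty) :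
    ∃ m ∈ S, ∀ y ∈ S, emb.pos m ≤ emb.pos y := by
  obtain ⟨x0, hx0⟩ := hS
  have hne : (emb.pos '' S).Nonempty := ⟨_, x0, hx0, rfl⟩
  obtain ⟨m, hmS, hme⟩ := Nat.sInf_mem hne
  exact ⟨m, hmS, fun y hy => hme ▸ Nat.sInf_le ⟨y, hy, rfl⟩⟩

lemma posne {x y : V} (h : x ≠ y) : emb.pos x ≠ emb.pos y :=
  fun he => h (emb.pos_inj he)

end DLP

namespace DLP
variable {V : Type*} {E : V → V → Prop} (emb : TwoPageEmbedding V E)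

set_option maxHeartbeats 1000000 in
lemma engine_pos
    (L A B C A' B' C' al be ga de : V)
    (hw : E L C) (he1 : E A A') (he3 : E B B') (he5 : E C C')
    (hf1 : E A' al) (hf2 : E B' al) (hf3 : E B' be) (hf4 : E C' be)
    (hga : ga ≠ be → E C' ga ∧ E ga de ∧ E be de)
    (houtC : ∀ x, E C' x → x = be ∨ x = ga)
    (houtB : ∀ x, E B' x → x = al ∨ x = be)
    (hLA : emb.pos L < emb.pos A) (hAB : emb.pos A < emb.pos B)
    (hBC : emb.pos B < emb.pos C)
    (hCA' : emb.pos C < emb.pos A') (hCB' : emb.pos C < emb.pos B')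
    (hCC' : emb.pos C < emb.pos C')
    (hmin : ∀ x, emb.pos C < emb.pos x → x ≠ A' → x ≠ B' → x ≠ C' →
      ∃ y, E y x ∧ emb.pos C < emb.pos y)
    (hA'B' : A' ≠ B') (hA'C' : A' ≠ C') (hB'C' : B' ≠ C')
    (halbe : al ≠ be) (hA'be : A' ≠ be) (hgaB' : ga ≠ B') :
    emb.pos C' < emb.pos B' ∧ emb.pos B' < emb.pos A' ∧
      (∀ x, ¬(emb.pos C' < emb.pos x ∧ emb.pos x < emb.pos B')) ∧
      (∀ x, ¬(emb.pos B' < emb.pos x ∧ emb.pos x < emb.pos A')) := by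
  have tA'al := emb.topo hf1
  have tB'al := emb.topo hf2
  have tB'be := emb.topo hf3
  have tC'be := emb.topo hf4
  -- Step 1 : B' before A'
  have hB'A' : emb.pos B' < emb.pos A' := by
    rcases Nat.lt_trichotomy (emb.pos B') (emb.pos A') with h | h | h
    · exact h
    · exact absurd (emb.pos_inj h) (Ne.symm hA'B')
    · exfalso
      exact bool3 (Ne.symm (cne emb hw he3 (by omega) (by omega) (by omega)))
        (cne emb hw he1 (by omega) (by omega) (by omega))
        (cne emb he1 he3 (by omega) (by omega) (by omega))
  -- Step 2 : C' is the minimum of R = {x | pos C < pos x}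
  obtain ⟨m, hmR, hmmin⟩ := exists_min emb {x | emb.pos C < emb.pos x} ⟨A', hCA'⟩
  have hmprime : m = A' ∨ m = B' ∨ m = C' := by
    by_contra hcon
    push_neg at hcon
    obtain ⟨y, hyE, hyC⟩ := hmin m hmR hcon.1 hcon.2.1 hcon.2.2
    have h1 := emb.topo hyE
    have h2 := hmmin y hyC
    omega
  have hC'min : ∀ y ∈ {x | emb.pos C < emb.pos x}, emb.pos C' ≤ emb.pos y := by
    rcases hmprime with h | h | h <;> rw [h] at hmmin
    · exfalso; have := hmmin B' hCB'; omega
    · exfalso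
      have hBC'lt : emb.pos B' < emb.pos C' :=
        Nat.lt_of_le_of_ne (hmmin C' hCC') (posne emb hB'C')
      rcases Nat.lt_trichotomy (emb.pos A') (emb.pos C') with h | h | h
      · exact bool5 (Ne.symm (cne emb he5 hf3 (by omega) (by omega) (by omega)))
          (Ne.symm (cne emb he3 he5 (by omega) (by omega) (by omega)))
          (Ne.symm (cne emb hw he3 (by omega) (by omega) (by omega)))
          (cne emb hw he1 (by omega) (by omega) (by omega))
          (cne emb he1 hf3 (by omega) (by omega) (by omega))
      · exact hA'C' (emb.pos_inj h)
      · exact bool5 (Ne.symm (cne emb he5 hf2 (by omega) (by omega) (by omega)))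
          (Ne.symm (cne emb he3 he5 (by omega) (by omega) (by omega)))
          (Ne.symm (cne emb hw he3 (by omega) (by omega) (by omega)))
          (cne emb hw he1 (by omega) (by omega) (by omega))
          (cne emb he1 hf2 (by omega) (by omega) (by omega))
    · exact hmmin
  have hC'B' : emb.pos C' < emb.pos B' :=
    Nat.lt_of_le_of_ne (hC'min B' hCB') (posne emb (Ne.symm hB'C'))
  have hC'A' : emb.pos C' < emb.pos A' := by omega
  have hbeC' : be ≠ C' := fun h => by subst h; omega
  have hbeB' : be ≠ B' := fun h => by subst h; omega
  have hCbe : emb.pos C < emb.pos be := by omega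
  -- Step 3 : B' is the minimum of R \ {C'}
  obtain ⟨m2, hm2S, hm2min⟩ :=
    exists_min emb {x | emb.pos C < emb.pos x ∧ x ≠ C'} ⟨B', hCB', hB'C'⟩
  have hB'S : B' ∈ {x | emb.pos C < emb.pos x ∧ x ≠ C'} := ⟨hCB', hB'C'⟩
  have hm2eq : m2 = B' := by
    by_contra hm2ne
    have hm2cases : m2 = A' ∨ m2 = be ∨ m2 = ga := by
      by_cases h1 : m2 = A'
      · exact Or.inl h1
      · obtain ⟨y, hyE, hyC⟩ := hmin m2 hm2S.1 h1 hm2ne hm2S.2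
        have hym2 := emb.topo hyE
        have hyC' : y = C' := by
          by_contra hyne
          have := hm2min y ⟨hyC, hyne⟩; omega
        rw [hyC'] at hyE
        exact Or.inr (houtC m2 hyE)
    rcases hm2cases with h | h | h
    · rw [h] at hm2min; have := hm2min B' hB'S; omega
    · rw [h] at hm2min; have := hm2min B' hB'S; omega
    · -- m2 = ga
      rw [h] at hm2min hm2S hm2ne
      by_cases hgb : ga = be
      · rw [hgb] at hm2min; have := hm2min B' hB'S; omega
      · obtain ⟨hf5, hg, hgb2⟩ := hga hgb
        have tgade := emb.topo hg
        have tbede := emb.topo hgb2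
        have tC'ga := emb.topo hf5
        have hgaB'lt : emb.pos ga < emb.pos B' :=
          Nat.lt_of_le_of_ne (hm2min B' hB'S) (posne emb hgaB')
        have hCga := hm2S.1
        exact bool3 (Ne.symm (cne emb he3 hg (by omega) (by omega) (by omega)))
          (cne emb he3 hf4 (by omega) (by omega) (by omega))
          (cne emb hf4 hg (by omega) (by omega) (by omega))
  rw [hm2eq] at hm2min
  have gap1 : ∀ x, ¬(emb.pos C' < emb.pos x ∧ emb.pos x < emb.pos B') := by
    intro x ⟨hx1, hx2⟩
    have hxC : emb.pos C < emb.pos x := by omega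
    have hxC' : x ≠ C' := fun h => by subst h; omega
    have := hm2min x ⟨hxC, hxC'⟩; omega
  -- Step 4 : A' is the minimum of R \ {C', B'}
  obtain ⟨m3, hm3S, hm3min⟩ :=
    exists_min emb {x | emb.pos C < emb.pos x ∧ x ≠ C' ∧ x ≠ B'}
      ⟨A', hCA', hA'C', hA'B'⟩
  have hA'S : A' ∈ {x | emb.pos C < emb.pos x ∧ x ≠ C' ∧ x ≠ B'} :=
    ⟨hCA', hA'C', hA'B'⟩
  have halC' : al ≠ C' := fun h => by subst h; omega
  have halB' : al ≠ B' := fun h => by subst h; omega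
  have hCal : emb.pos C < emb.pos al := by omega
  have hbeS : be ∈ {x | emb.pos C < emb.pos x ∧ x ≠ C' ∧ x ≠ B'} := ⟨hCbe, hbeC', hbeB'⟩
  have halS : al ∈ {x | emb.pos C < emb.pos x ∧ x ≠ C' ∧ x ≠ B'} := ⟨hCal, halC', halB'⟩
  have hbekill : emb.pos be ≤ emb.pos al → emb.pos be ≤ emb.pos A' → False := by
    intro hle1 hle2
    have hbeal : emb.pos be < emb.pos al := Nat.lt_of_le_of_ne hle1 (posne emb (Ne.symm halbe))
    have hbeA' : emb.pos be < emb.pos A' := Nat.lt_of_le_of_ne hle2 (posne emb (Ne.symm hA'be))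
    exact bool5 (Ne.symm (cne emb hf4 hf2 (by omega) (by omega) (by omega)))
      (cne emb he3 hf4 (by omega) (by omega) (by omega)).symm
      (Ne.symm (cne emb hw he3 (by omega) (by omega) (by omega)))
      (cne emb hw he1 (by omega) (by omega) (by omega))
      (cne emb he1 hf2 (by omega) (by omega) (by omega))
  have hm3eq : m3 = A' := by
    by_contra hm3ne
    have hm3cases : m3 = al ∨ m3 = be ∨ m3 = ga := by
      obtain ⟨y, hyE, hyC⟩ := hmin m3 hm3S.1 hm3ne hm3S.2.2 hm3S.2.1
      have hym3 := emb.topo hyE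
      have hyC' : y = C' ∨ y = B' := by
        by_contra hyne
        push_neg at hyne
        have := hm3min y ⟨hyC, hyne.1, hyne.2⟩; omega
      rcases hyC' with h | h
      · rw [h] at hyE
        rcases houtC m3 hyE with h2 | h2
        · exact Or.inr (Or.inl h2)
        · exact Or.inr (Or.inr h2)
      · rw [h] at hyE
        rcases houtB m3 hyE with h2 | h2
        · exact Or.inl h2
        · exact Or.inr (Or.inl h2)
    rcases hm3cases with h | h | h
    · rw [h] at hm3min; have := hm3min A' hA'S; omega
    · rw [h] at hm3min
      exact hbekill (hm3min al halS) (hm3min A' hA'S)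
    · -- m3 = ga
      rw [h] at hm3min hm3S hm3ne
      by_cases hgb : ga = be
      · rw [hgb] at hm3min
        exact hbekill (hm3min al halS) (hm3min A' hA'S)
      · obtain ⟨hf5, hg, hgb2⟩ := hga hgb
        have tgade := emb.topo hg
        have tbede := emb.topo hgb2
        have tC'ga := emb.topo hf5
        have hgaC'ne : ga ≠ C' := fun h2 => by rw [h2] at tC'ga; omega
        have hB'ga : emb.pos B' < emb.pos ga :=
          Nat.lt_of_le_of_ne (hm2min ga ⟨hm3S.1, hgaC'ne⟩)
            (posne emb (Ne.symm hm3S.2.2))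
        have hgabe : emb.pos ga < emb.pos be :=
          Nat.lt_of_le_of_ne (hm3min be hbeS) (posne emb hgb)
        exact bool5 (Ne.symm (cne emb hf3 hg (by omega) (by omega) (by omega)))
          (Ne.symm (cne emb hf5 hf3 (by omega) (by omega) (by omega)))
          (Ne.symm (cne emb he3 hf5 (by omega) (by omega) (by omega)))
          (cne emb he3 hf4 (by omega) (by omega) (by omega))
          (cne emb hf4 hg (by omega) (by omega) (by omega))
  rw [hm3eq] at hm3min
  have gap2 : ∀ x, ¬(emb.pos B' < emb.pos x ∧ emb.pos x < emb.pos A') := by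
    intro x ⟨hx1, hx2⟩
    have hxC : emb.pos C < emb.pos x := by omega
    have hxC' : x ≠ C' := fun h => by subst h; omega
    have hxB' : x ≠ B' := fun h => by subst h; omega
    have := hm3min x ⟨hxC, hxC', hxB'⟩; omega
  exact ⟨hC'B', hB'A', gap1, gap2⟩

end DLP

namespace DLP
variable {V : Type*} {E : V → V → Prop} (emb : TwoPageEmbedding V E)

set_option maxHeartbeats 1000000 in
lemma engine_neg
    (L Ab Bb Cb P1 P2 P3 al be : V)
    (hw : E L Cb) (hn2 : E Bb P1) (hn3 : E Bb P2) (hn4 : E Ab P2) (hn5 : E Ab P3)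
    (hm1 : E P1 al) (hm2 : E P2 al) (hm3 : E P2 be) (hm4 : E P3 be)
    (houtP1 : ∀ x, E P1 x → x = al)
    (houtP2 : ∀ x, E P2 x → x = al ∨ x = be)
    (hLA : emb.pos L < emb.pos Ab) (hAB : emb.pos Ab < emb.pos Bb)
    (hBC : emb.pos Bb < emb.pos Cb)
    (hCP1 : emb.pos Cb < emb.pos P1) (hCP2 : emb.pos Cb < emb.pos P2)
    (hCP3 : emb.pos Cb < emb.pos P3)
    (hmin : ∀ x, emb.pos Cb < emb.pos x → x ≠ P1 → x ≠ P2 → x ≠ P3 →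
      ∃ y, E y x ∧ emb.pos Cb < emb.pos y)
    (hP12 : P1 ≠ P2) (hP13 : P1 ≠ P3) (hP23 : P2 ≠ P3)
    (halbe : al ≠ be) (halP3 : al ≠ P3) :
    emb.pos P1 < emb.pos P2 ∧ emb.pos P2 < emb.pos P3 ∧
      (∀ x, ¬(emb.pos P1 < emb.pos x ∧ emb.pos x < emb.pos P2)) ∧
      (∀ x, ¬(emb.pos P2 < emb.pos x ∧ emb.pos x < emb.pos P3)) := by
  have tP1al := emb.topo hm1
  have tP2al := emb.topo hm2
  have tP2be := emb.topo hm3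
  have tP3be := emb.topo hm4
  -- minimum of R is P1
  obtain ⟨m, hmR, hmmin⟩ := exists_min emb {x | emb.pos Cb < emb.pos x} ⟨P1, hCP1⟩
  have hmprime : m = P1 ∨ m = P2 ∨ m = P3 := by
    by_contra hcon
    push_neg at hcon
    obtain ⟨y, hyE, hyC⟩ := hmin m hmR hcon.1 hcon.2.1 hcon.2.2
    have h1 := emb.topo hyE
    have h2 := hmmin y hyC
    omega
  have hP1min : ∀ y ∈ {x | emb.pos Cb < emb.pos x}, emb.pos P1 ≤ emb.pos y := by
    rcases hmprime with h | h | h <;> rw [h] at hmmin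
    · exact hmmin
    · exfalso
      have hP2P1 : emb.pos P2 < emb.pos P1 :=
        Nat.lt_of_le_of_ne (hmmin P1 hCP1) (posne emb (Ne.symm hP12))
      exact bool3 (Ne.symm (cne emb hw hn4 (by omega) (by omega) (by omega)))
        (cne emb hw hn2 (by omega) (by omega) (by omega))
        (cne emb hn4 hn2 (by omega) (by omega) (by omega)).symm
    · exfalso
      have hP3P1 : emb.pos P3 < emb.pos P1 :=
        Nat.lt_of_le_of_ne (hmmin P1 hCP1) (posne emb (Ne.symm hP13))
      exact bool3 (Ne.symm (cne emb hw hn5 (by omega) (by omega) (by omega)))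
        (cne emb hw hn2 (by omega) (by omega) (by omega))
        (cne emb hn5 hn2 (by omega) (by omega) (by omega)).symm
  have hP1P2 : emb.pos P1 < emb.pos P2 :=
    Nat.lt_of_le_of_ne (hP1min P2 hCP2) (posne emb hP12)
  have hP1P3 : emb.pos P1 < emb.pos P3 :=
    Nat.lt_of_le_of_ne (hP1min P3 hCP3) (posne emb hP13)
  -- second minimum is P2
  obtain ⟨m2, hm2S, hm2min⟩ :=
    exists_min emb {x | emb.pos Cb < emb.pos x ∧ x ≠ P1} ⟨P2, hCP2, Ne.symm hP12⟩
  have hP2S : P2 ∈ {x | emb.pos Cb < emb.pos x ∧ x ≠ P1} := ⟨hCP2, Ne.symm hP12⟩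
  have hP3S : P3 ∈ {x | emb.pos Cb < emb.pos x ∧ x ≠ P1} := ⟨hCP3, Ne.symm hP13⟩
  have hm2eq : m2 = P2 := by
    by_contra hm2ne
    have hm2cases : m2 = P3 ∨ m2 = al := by
      by_cases h1 : m2 = P3
      · exact Or.inl h1
      · obtain ⟨y, hyE, hyC⟩ := hmin m2 hm2S.1 hm2S.2 hm2ne h1
        have hym2 := emb.topo hyE
        have hyP1 : y = P1 := by
          by_contra hyne
          have := hm2min y ⟨hyC, hyne⟩; omega
        rw [hyP1] at hyE
        exact Or.inr (houtP1 m2 hyE)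
    rcases hm2cases with h | h
    · rw [h] at hm2min
      have hP3P2 : emb.pos P3 < emb.pos P2 :=
        Nat.lt_of_le_of_ne (hm2min P2 hP2S) (posne emb (Ne.symm hP23))
      exact bool3 (Ne.symm (cne emb hw hn5 (by omega) (by omega) (by omega)))
        (cne emb hw hn3 (by omega) (by omega) (by omega))
        (cne emb hn5 hn3 (by omega) (by omega) (by omega)).symm
    · rw [h] at hm2min; have := hm2min P2 hP2S; omega
  rw [hm2eq] at hm2min
  have hP2P3 : emb.pos P2 < emb.pos P3 :=
    Nat.lt_of_le_of_ne (hm2min P3 hP3S) (posne emb hP23)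
  have gap1 : ∀ x, ¬(emb.pos P1 < emb.pos x ∧ emb.pos x < emb.pos P2) := by
    intro x ⟨hx1, hx2⟩
    have hxC : emb.pos Cb < emb.pos x := by omega
    have hxP1 : x ≠ P1 := fun h => by subst h; omega
    have := hm2min x ⟨hxC, hxP1⟩; omega
  -- third minimum is P3
  obtain ⟨m3, hm3S, hm3min⟩ :=
    exists_min emb {x | emb.pos Cb < emb.pos x ∧ x ≠ P1 ∧ x ≠ P2}
      ⟨P3, hCP3, Ne.symm hP13, Ne.symm hP23⟩
  have hP3S3 : P3 ∈ {x | emb.pos Cb < emb.pos x ∧ x ≠ P1 ∧ x ≠ P2} :=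
    ⟨hCP3, Ne.symm hP13, Ne.symm hP23⟩
  have hbeP1 : be ≠ P1 := fun h => by rw [h] at tP2be; omega
  have hbeS3 : be ∈ {x | emb.pos Cb < emb.pos x ∧ x ≠ P1 ∧ x ≠ P2} :=
    ⟨by omega, hbeP1, fun h => by rw [h] at tP2be; omega⟩
  have hm3eq : m3 = P3 := by
    by_contra hm3ne
    have hm3cases : m3 = al ∨ m3 = be := by
      obtain ⟨y, hyE, hyC⟩ := hmin m3 hm3S.1 hm3S.2.1 hm3S.2.2 hm3ne
      have hym3 := emb.topo hyE
      have hyP : y = P1 ∨ y = P2 := by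
        by_contra hyne
        push_neg at hyne
        have := hm3min y ⟨hyC, hyne.1, hyne.2⟩; omega
      rcases hyP with h | h
      · rw [h] at hyE; exact Or.inl (houtP1 m3 hyE)
      · rw [h] at hyE; exact houtP2 m3 hyE
    rcases hm3cases with h | h
    · -- m3 = al
      rw [h] at hm3min
      have halbe' : emb.pos al < emb.pos be :=
        Nat.lt_of_le_of_ne (hm3min be hbeS3) (posne emb halbe)
      have halP3' : emb.pos al < emb.pos P3 :=
        Nat.lt_of_le_of_ne (hm3min P3 hP3S3) (posne emb halP3)
      exact bool5 (cne emb hm1 hm3 (by omega) (by omega) (by omega))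
        (Ne.symm (cne emb hn5 hm3 (by omega) (by omega) (by omega)))
        (Ne.symm (cne emb hw hn5 (by omega) (by omega) (by omega)))
        (cne emb hw hn3 (by omega) (by omega) (by omega))
        (cne emb hn3 hm1 (by omega) (by omega) (by omega))
    · rw [h] at hm3min; have := hm3min P3 hP3S3; omega
  rw [hm3eq] at hm3min
  have gap2 : ∀ x, ¬(emb.pos P2 < emb.pos x ∧ emb.pos x < emb.pos P3) := by
    intro x ⟨hx1, hx2⟩
    have hxC : emb.pos Cb < emb.pos x := by omega
    have hxP1 : x ≠ P1 := fun h => by subst h; omega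
    have hxP2 : x ≠ P2 := fun h => by subst h; omega
    have := hm3min x ⟨hxC, hxP1, hxP2⟩; omega
  exact ⟨hP1P2, hP2P3, gap1, gap2⟩

end DLP

namespace DLP
variable {V : Type*} {E : V → V → Prop} (emb : TwoPageEmbedding V E)

set_option maxHeartbeats 1000000 in
lemma engine_base
    (P1 P2 A' B' C' al be ga de eps : V)
    (ha1 : E P1 A') (ha2 : E P1 B') (ha3 : E P2 B') (ha4 : E P2 C')
    (hF1 : E A' al) (hF2 : E B' al) (hF3 : E B' be) (hF4 : E C' be)
    (hh1 : E be eps) (hh2 : E al eps)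
    (hga : ga ≠ be → E C' ga ∧ E ga de ∧ E be de)
    (houtC : ∀ x, E C' x → x = be ∨ x = ga)
    (houtB : ∀ x, E B' x → x = al ∨ x = be)
    (hP12 : emb.pos P1 < emb.pos P2)
    (htwo : ∀ x, x ≠ P1 → x ≠ P2 → emb.pos P2 < emb.pos x)
    (hmin : ∀ x, emb.pos P2 < emb.pos x → x ≠ A' → x ≠ B' → x ≠ C' →
      ∃ y, E y x ∧ emb.pos P2 < emb.pos y)
    (hA'B' : A' ≠ B') (hA'C' : A' ≠ C') (hB'C' : B' ≠ C')
    (halbe : al ≠ be) (hA'be : A' ≠ be) (hgaB' : ga ≠ B') (hgaA' : ga ≠ A')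
    (hA'P2 : A' ≠ P2) (hgaP1 : ga ≠ P1) (hgaP2 : ga ≠ P2) :
    emb.pos C' < emb.pos B' ∧ emb.pos B' < emb.pos A' ∧
      (∀ x, ¬(emb.pos C' < emb.pos x ∧ emb.pos x < emb.pos B')) ∧
      (∀ x, ¬(emb.pos B' < emb.pos x ∧ emb.pos x < emb.pos A')) := by
  have ta1 := emb.topo ha1
  have ta2 := emb.topo ha2
  have ta3 := emb.topo ha3
  have ta4 := emb.topo ha4
  have tF1 := emb.topo hF1
  have tF2 := emb.topo hF2
  have tF3 := emb.topo hF3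
  have tF4 := emb.topo hF4
  have th1 := emb.topo hh1
  have th2 := emb.topo hh2
  have hA'P1 : A' ≠ P1 := fun h => by rw [h] at ta1; omega
  have hpA' : emb.pos P2 < emb.pos A' := htwo A' hA'P1 hA'P2
  have hpga : emb.pos P2 < emb.pos ga := htwo ga hgaP1 hgaP2
  -- minimum of R = {x | pos P2 < pos x} is C'
  obtain ⟨m, hmR, hmmin⟩ := exists_min emb {x | emb.pos P2 < emb.pos x} ⟨A', hpA'⟩
  have hmprime : m = A' ∨ m = B' ∨ m = C' := by
    by_contra hcon
    push_neg at hcon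
    obtain ⟨y, hyE, hyC⟩ := hmin m hmR hcon.1 hcon.2.1 hcon.2.2
    have h1 := emb.topo hyE
    have h2 := hmmin y hyC
    omega
  have hC'min : ∀ y ∈ {x | emb.pos P2 < emb.pos x}, emb.pos C' ≤ emb.pos y := by
    rcases hmprime with h | h | h <;> rw [h] at hmmin
    · -- m = A' : impossible
      exfalso
      have hA'B'lt : emb.pos A' < emb.pos B' :=
        Nat.lt_of_le_of_ne (hmmin B' ta3) (posne emb hA'B')
      have hA'C'lt : emb.pos A' < emb.pos C' :=
        Nat.lt_of_le_of_ne (hmmin C' ta4) (posne emb hA'C')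
      rcases Nat.lt_trichotomy (emb.pos B') (emb.pos C') with h2 | h2 | h2
      · exact bool5 (Ne.symm (cne emb ha2 hF1 (by omega) (by omega) (by omega)))
          (cne emb ha2 ha4 (by omega) (by omega) (by omega))
          (Ne.symm (cne emb ha1 ha4 (by omega) (by omega) (by omega)))
          (cne emb ha1 ha3 (by omega) (by omega) (by omega))
          (cne emb ha3 hF1 (by omega) (by omega) (by omega))
      · exact hB'C' (emb.pos_inj h2)
      · -- C' < B'
        rcases Nat.lt_trichotomy (emb.pos B') (emb.pos ga) with h3 | h3 | h3
        · rcases Nat.lt_trichotomy (emb.pos al) (emb.pos be) with h4 | h4 | h4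
          · exact bool3 (Ne.symm (cne emb hF1 hF4 (by omega) (by omega) (by omega)))
              (Ne.symm (cne emb ha2 hF1 (by omega) (by omega) (by omega)))
              (cne emb ha2 hF4 (by omega) (by omega) (by omega))
          · exact halbe (emb.pos_inj h4)
          · exact bool5 (cne emb hF4 hF2 (by omega) (by omega) (by omega))
              (cne emb hF2 hh1 (by omega) (by omega)
                (by omega))
              (Ne.symm (cne emb hF1 hh1
                (Nat.lt_of_le_of_ne (hmmin be (show emb.pos P2 < emb.pos be by omega)) (posne emb hA'be))
                (by omega) (by omega)))
              (Ne.symm (cne emb ha2 hF1 (by omega) (by omega) (by omega)))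
              (cne emb ha2 hF4 (by omega) (by omega) (by omega))
        · exact hgaB' (emb.pos_inj h3.symm)
        · -- ga < B'
          by_cases hgb : ga = be
          · rw [hgb] at h3; omega
          · obtain ⟨hf5, hg, hgb2⟩ := hga hgb
            have tf5 := emb.topo hf5
            have tg := emb.topo hg
            have tgb2 := emb.topo hgb2
            exact bool3 (Ne.symm (cne emb ha2 hg (by omega) (by omega) (by omega)))
              (cne emb ha2 hF4 (by omega) (by omega) (by omega))
              (cne emb hF4 hg (by omega) (by omega) (by omega))
    · -- m = B' : impossible
      exfalso
      have hB'A'lt : emb.pos B' < emb.pos A' :=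
        Nat.lt_of_le_of_ne (hmmin A' hpA') (posne emb (Ne.symm hA'B'))
      have hB'C'lt : emb.pos B' < emb.pos C' :=
        Nat.lt_of_le_of_ne (hmmin C' ta4) (posne emb hB'C')
      rcases Nat.lt_trichotomy (emb.pos A') (emb.pos C') with h2 | h2 | h2
      · exact bool3 (Ne.symm (cne emb ha1 hF3 (by omega) (by omega) (by omega)))
          (cne emb ha1 ha4 (by omega) (by omega) (by omega))
          (cne emb ha4 hF3 (by omega) (by omega) (by omega))
      · exact hA'C' (emb.pos_inj h2)
      · -- C' < A'
        rcases Nat.lt_trichotomy (emb.pos A') (emb.pos be) with h3 | h3 | h3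
        · rcases Nat.lt_trichotomy (emb.pos A') (emb.pos ga) with h4 | h4 | h4
          · rcases Nat.lt_trichotomy (emb.pos al) (emb.pos be) with h5 | h5 | h5
            · exact bool3 (Ne.symm (cne emb ha1 hF4 (by omega) (by omega) (by omega)))
                (cne emb ha1 hF2 (by omega) (by omega) (by omega))
                (cne emb hF2 hF4 (by omega) (by omega) (by omega))
            · exact halbe (emb.pos_inj h5)
            · exact bool5 (Ne.symm (cne emb hF1 hh1 (by omega) (by omega) (by omega)))
                (Ne.symm (cne emb hF4 hF1 (by omega) (by omega) (by omega)))
                (Ne.symm (cne emb ha1 hF4 (by omega) (by omega) (by omega)))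
                (cne emb ha1 hF2 (by omega) (by omega) (by omega))
                (cne emb hF2 hh1 (by omega) (by omega) (by omega))
          · exact hgaA' (emb.pos_inj h4.symm)
          · -- ga < A'
            by_cases hgb : ga = be
            · rw [hgb] at h4; omega
            · obtain ⟨hf5, hg, hgb2⟩ := hga hgb
              have tf5 := emb.topo hf5
              have tg := emb.topo hg
              have tgb2 := emb.topo hgb2
              have hB'ga : emb.pos B' < emb.pos ga :=
                Nat.lt_of_le_of_ne (hmmin ga hpga) (posne emb (Ne.symm hgaB'))
              exact bool3 (Ne.symm (cne emb ha1 hg (by omega) (by omega) (by omega)))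
                (cne emb ha1 hF3 (by omega) (by omega) (by omega))
                (cne emb hF3 hg (by omega) (by omega) (by omega))
        · exact hA'be (emb.pos_inj h3)
        · -- be < A'
          exact bool3 (Ne.symm (cne emb ha1 hh1 (by omega) (by omega) (by omega)))
            (cne emb ha1 hF2 (by omega) (by omega) (by omega))
            (cne emb hF2 hh1 (by omega) (by omega) (by omega))
    · exact hmmin
  have hC'B' : emb.pos C' < emb.pos B' :=
    Nat.lt_of_le_of_ne (hC'min B' ta3) (posne emb (Ne.symm hB'C'))
  have hC'A' : emb.pos C' < emb.pos A' :=
    Nat.lt_of_le_of_ne (hC'min A' hpA') (posne emb (Ne.symm hA'C'))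
  have hbeC' : be ≠ C' := fun h => by rw [h] at tF4; omega
  have hbeB' : be ≠ B' := fun h => by rw [h] at tF3; omega
  have hbeP2 : emb.pos P2 < emb.pos be := by omega
  -- second minimum is B'
  obtain ⟨m2, hm2S, hm2min⟩ :=
    exists_min emb {x | emb.pos P2 < emb.pos x ∧ x ≠ C'} ⟨B', ta3, hB'C'⟩
  have hB'S : B' ∈ {x | emb.pos P2 < emb.pos x ∧ x ≠ C'} := ⟨ta3, hB'C'⟩
  have hA'S : A' ∈ {x | emb.pos P2 < emb.pos x ∧ x ≠ C'} := ⟨hpA', hA'C'⟩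
  have hbeS : be ∈ {x | emb.pos P2 < emb.pos x ∧ x ≠ C'} := ⟨hbeP2, hbeC'⟩
  have hm2eq : m2 = B' := by
    by_contra hm2ne
    have hm2cases : m2 = A' ∨ m2 = be ∨ m2 = ga := by
      by_cases h1 : m2 = A'
      · exact Or.inl h1
      · obtain ⟨y, hyE, hyC⟩ := hmin m2 hm2S.1 h1 hm2ne hm2S.2
        have hym2 := emb.topo hyE
        have hyC' : y = C' := by
          by_contra hyne
          have := hm2min y ⟨hyC, hyne⟩; omega
        rw [hyC'] at hyE
        exact Or.inr (houtC m2 hyE)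
    rcases hm2cases with h | h | h
    · -- m2 = A'
      rw [h] at hm2min
      have hA'B'lt : emb.pos A' < emb.pos B' :=
        Nat.lt_of_le_of_ne (hm2min B' hB'S) (posne emb hA'B')
      have hA'belt : emb.pos A' < emb.pos be :=
        Nat.lt_of_le_of_ne (hm2min be hbeS) (posne emb hA'be)
      exact bool3 (Ne.symm (cne emb ha1 hF4 (by omega) (by omega) (by omega)))
        (cne emb ha1 ha3 (by omega) (by omega) (by omega))
        (cne emb ha3 hF4 (by omega) (by omega) (by omega))
    · rw [h] at hm2min; have := hm2min B' hB'S; omega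
    · -- m2 = ga
      rw [h] at hm2min hm2S hm2ne
      by_cases hgb : ga = be
      · rw [hgb] at hm2min; have := hm2min B' hB'S; omega
      · obtain ⟨hf5, hg, hgb2⟩ := hga hgb
        have tf5 := emb.topo hf5
        have tg := emb.topo hg
        have tgb2 := emb.topo hgb2
        have hgaB'lt : emb.pos ga < emb.pos B' :=
          Nat.lt_of_le_of_ne (hm2min B' hB'S) (posne emb hgaB')
        have hgabe : emb.pos ga < emb.pos be :=
          Nat.lt_of_le_of_ne (hm2min be hbeS) (posne emb hgb)
        exact bool3 (Ne.symm (cne emb ha2 hg (by omega) (by omega) (by omega)))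
          (cne emb ha2 hF4 (by omega) (by omega) (by omega))
          (cne emb hF4 hg (by omega) (by omega) (by omega))
  rw [hm2eq] at hm2min
  have hB'A' : emb.pos B' < emb.pos A' :=
    Nat.lt_of_le_of_ne (hm2min A' hA'S) (posne emb (Ne.symm hA'B'))
  have gap1 : ∀ x, ¬(emb.pos C' < emb.pos x ∧ emb.pos x < emb.pos B') := by
    intro x ⟨hx1, hx2⟩
    have hxP : emb.pos P2 < emb.pos x := by omega
    have hxC' : x ≠ C' := fun h => by subst h; omega
    have := hm2min x ⟨hxP, hxC'⟩; omega
  -- third minimum is A'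
  obtain ⟨m3, hm3S, hm3min⟩ :=
    exists_min emb {x | emb.pos P2 < emb.pos x ∧ x ≠ C' ∧ x ≠ B'}
      ⟨A', hpA', hA'C', hA'B'⟩
  have hA'S3 : A' ∈ {x | emb.pos P2 < emb.pos x ∧ x ≠ C' ∧ x ≠ B'} :=
    ⟨hpA', hA'C', hA'B'⟩
  have halC' : al ≠ C' := fun h => by rw [h] at tF2; omega
  have halB' : al ≠ B' := fun h => by rw [h] at tF2; omega
  have hbeS3 : be ∈ {x | emb.pos P2 < emb.pos x ∧ x ≠ C' ∧ x ≠ B'} :=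
    ⟨hbeP2, hbeC', hbeB'⟩
  have halS3 : al ∈ {x | emb.pos P2 < emb.pos x ∧ x ≠ C' ∧ x ≠ B'} :=
    ⟨by omega, halC', halB'⟩
  have hbekill : emb.pos be ≤ emb.pos al → emb.pos be ≤ emb.pos A' → False := by
    intro hle1 hle2
    have hbeal : emb.pos be < emb.pos al :=
      Nat.lt_of_le_of_ne hle1 (posne emb (Ne.symm halbe))
    have hbeA' : emb.pos be < emb.pos A' :=
      Nat.lt_of_le_of_ne hle2 (posne emb (Ne.symm hA'be))
    exact bool3 (Ne.symm (cne emb ha1 hh1 (by omega) (by omega) (by omega)))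
      (cne emb ha1 hF2 (by omega) (by omega) (by omega))
      (cne emb hF2 hh1 (by omega) (by omega) (by omega))
  have hm3eq : m3 = A' := by
    by_contra hm3ne
    have hm3cases : m3 = al ∨ m3 = be ∨ m3 = ga := by
      obtain ⟨y, hyE, hyC⟩ := hmin m3 hm3S.1 hm3ne hm3S.2.2 hm3S.2.1
      have hym3 := emb.topo hyE
      have hyC' : y = C' ∨ y = B' := by
        by_contra hyne
        push_neg at hyne
        have := hm3min y ⟨hyC, hyne.1, hyne.2⟩; omega
      rcases hyC' with h | h
      · rw [h] at hyE
        rcases houtC m3 hyE with h2 | h2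
        · exact Or.inr (Or.inl h2)
        · exact Or.inr (Or.inr h2)
      · rw [h] at hyE
        rcases houtB m3 hyE with h2 | h2
        · exact Or.inl h2
        · exact Or.inr (Or.inl h2)
    rcases hm3cases with h | h | h
    · rw [h] at hm3min; have := hm3min A' hA'S3; omega
    · rw [h] at hm3min
      exact hbekill (hm3min al halS3) (hm3min A' hA'S3)
    · -- m3 = ga
      rw [h] at hm3min hm3S hm3ne
      by_cases hgb : ga = be
      · rw [hgb] at hm3min
        exact hbekill (hm3min al halS3) (hm3min A' hA'S3)
      · obtain ⟨hf5, hg, hgb2⟩ := hga hgb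
        have tf5 := emb.topo hf5
        have tg := emb.topo hg
        have tgb2 := emb.topo hgb2
        have hgaC'ne : ga ≠ C' := fun h2 => by rw [h2] at tf5; omega
        have hB'ga : emb.pos B' < emb.pos ga :=
          Nat.lt_of_le_of_ne (hm2min ga ⟨hm3S.1, hgaC'ne⟩)
            (posne emb (Ne.symm hm3S.2.2))
        have hgabe : emb.pos ga < emb.pos be :=
          Nat.lt_of_le_of_ne (hm3min be hbeS3) (posne emb hgb)
        exact bool5 (cne emb hF4 hg (by omega) (by omega) (by omega))
          (Ne.symm (cne emb hF3 hg (by omega) (by omega) (by omega)))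
          (Ne.symm (cne emb hf5 hF3 (by omega) (by omega) (by omega)))
          (Ne.symm (cne emb ha2 hf5 (by omega) (by omega) (by omega)))
          (cne emb ha2 hF4 (by omega) (by omega) (by omega))
  rw [hm3eq] at hm3min
  have gap2 : ∀ x, ¬(emb.pos B' < emb.pos x ∧ emb.pos x < emb.pos A') := by
    intro x ⟨hx1, hx2⟩
    have hxP : emb.pos P2 < emb.pos x := by omega
    have hxC' : x ≠ C' := fun h => by subst h; omega
    have hxB' : x ≠ B' := fun h => by subst h; omega
    have := hm3min x ⟨hxP, hxC', hxB'⟩; omega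
  exact ⟨hC'B', hB'A', gap1, gap2⟩

end DLP

namespace DLP
open DLV

variable {ℓ : ℕ}

-- edge constructors
lemma Es1u : DLEdge ℓ ⟨.s1, trivial⟩ ⟨.u 0, Nat.zero_le ℓ⟩ := DLEdgeV.s1u
lemma Es1v : DLEdge ℓ ⟨.s1, trivial⟩ ⟨.v 0, Nat.zero_le ℓ⟩ := DLEdgeV.s1v
lemma Es2v : DLEdge ℓ ⟨.s2, trivial⟩ ⟨.v 0, Nat.zero_le ℓ⟩ := DLEdgeV.s2v
lemma Es2w : DLEdge ℓ ⟨.s2, trivial⟩ ⟨.w 0, Nat.zero_le ℓ⟩ := DLEdgeV.s2w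
lemma Eut1 : DLEdge ℓ ⟨.u ℓ, le_rfl⟩ ⟨.t1, trivial⟩ := DLEdgeV.ut1
lemma Evt1 : DLEdge ℓ ⟨.v ℓ, le_rfl⟩ ⟨.t1, trivial⟩ := DLEdgeV.vt1
lemma Evt2 : DLEdge ℓ ⟨.v ℓ, le_rfl⟩ ⟨.t2, trivial⟩ := DLEdgeV.vt2
lemma Ewt2 : DLEdge ℓ ⟨.w ℓ, le_rfl⟩ ⟨.t2, trivial⟩ := DLEdgeV.wt2
lemma Euu {i : ℕ} (h : i < ℓ) : DLEdge ℓ ⟨.u i, h.le⟩ ⟨.u (i+1), h⟩ := DLEdgeV.uu h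
lemma Evu {i : ℕ} (h : i < ℓ) : DLEdge ℓ ⟨.v i, h.le⟩ ⟨.u (i+1), h⟩ := DLEdgeV.vu h
lemma Evv {i : ℕ} (h : i < ℓ) : DLEdge ℓ ⟨.v i, h.le⟩ ⟨.v (i+1), h⟩ := DLEdgeV.vv h
lemma Ewv {i : ℕ} (h : i < ℓ) : DLEdge ℓ ⟨.w i, h.le⟩ ⟨.v (i+1), h⟩ := DLEdgeV.wv h
lemma Eww {i : ℕ} (h : i < ℓ) : DLEdge ℓ ⟨.w i, h.le⟩ ⟨.w (i+1), h⟩ := DLEdgeV.ww h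

lemma vext (x : DLVert ℓ) {a : DLV} (h : x.val = a) : x = ⟨a, h ▸ x.property⟩ :=
  Subtype.ext h

lemma vne {a b : DLV} {ha : DLV.valid ℓ a} {hb : DLV.valid ℓ b} (h : a ≠ b) :
    (⟨a, ha⟩ : DLVert ℓ) ≠ ⟨b, hb⟩ :=
  fun he => h (congrArg Subtype.val he)

-- inversion lemmas (out-neighbours)
lemma out_u {i : ℕ} (x : DLVert ℓ) (h : DLEdgeV ℓ (.u i) x.val) :
    (i < ℓ ∧ x.val = .u (i+1)) ∨ (i = ℓ ∧ x.val = .t1) := by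
  obtain ⟨xv, hxv⟩ := x
  cases h with
  | ut1 => exact Or.inr ⟨rfl, rfl⟩
  | uu h' => exact Or.inl ⟨h', rfl⟩

lemma out_v {i : ℕ} (x : DLVert ℓ) (h : DLEdgeV ℓ (.v i) x.val) :
    (i < ℓ ∧ (x.val = .u (i+1) ∨ x.val = .v (i+1))) ∨
      (i = ℓ ∧ (x.val = .t1 ∨ x.val = .t2)) := by
  obtain ⟨xv, hxv⟩ := x
  cases h with
  | vt1 => exact Or.inr ⟨rfl, Or.inl rfl⟩
  | vt2 => exact Or.inr ⟨rfl, Or.inr rfl⟩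
  | vu h' => exact Or.inl ⟨h', Or.inl rfl⟩
  | vv h' => exact Or.inl ⟨h', Or.inr rfl⟩

lemma out_w {i : ℕ} (x : DLVert ℓ) (h : DLEdgeV ℓ (.w i) x.val) :
    (i < ℓ ∧ (x.val = .v (i+1) ∨ x.val = .w (i+1))) ∨ (i = ℓ ∧ x.val = .t2) := by
  obtain ⟨xv, hxv⟩ := x
  cases h with
  | wt2 => exact Or.inr ⟨rfl, rfl⟩
  | wv h' => exact Or.inl ⟨h', Or.inl rfl⟩
  | ww h' => exact Or.inl ⟨h', Or.inr rfl⟩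

-- every non-source vertex has an in-neighbour
lemma has_in (x : DLVert ℓ) (h1 : x.val ≠ .s1) (h2 : x.val ≠ .s2) :
    ∃ y, DLEdge ℓ y x := by
  obtain ⟨xv, hxv⟩ := x
  cases xv with
  | s1 => exact absurd rfl h1
  | s2 => exact absurd rfl h2
  | t1 => exact ⟨⟨.u ℓ, le_rfl⟩, DLEdgeV.ut1⟩
  | t2 => exact ⟨⟨.w ℓ, le_rfl⟩, DLEdgeV.wt2⟩
  | u j =>
    cases j with
    | zero => exact ⟨⟨.s1, trivial⟩, DLEdgeV.s1u⟩
    | succ n => exact ⟨⟨.u n, by exact Nat.le_of_succ_le hxv⟩, DLEdgeV.uu hxv⟩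
  | v j =>
    cases j with
    | zero => exact ⟨⟨.s1, trivial⟩, DLEdgeV.s1v⟩
    | succ n => exact ⟨⟨.v n, by exact Nat.le_of_succ_le hxv⟩, DLEdgeV.vv hxv⟩
  | w j =>
    cases j with
    | zero => exact ⟨⟨.s2, trivial⟩, DLEdgeV.s2w⟩
    | succ n => exact ⟨⟨.w n, by exact Nat.le_of_succ_le hxv⟩, DLEdgeV.ww hxv⟩

variable (emb : TwoPageEmbedding (DLVert ℓ) (DLEdge ℓ))

-- monotone rails
lemma mono_u : ∀ (k : ℕ) (hk : k ≤ ℓ) (j : ℕ) (hjk : j ≤ k),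
    emb.pos ⟨.u j, le_trans hjk hk⟩ ≤ emb.pos ⟨.u k, hk⟩ := by
  intro k
  induction k with
  | zero =>
    intro hk j hjk
    obtain rfl : j = 0 := by omega
    exact le_rfl
  | succ n ih =>
    intro hk j hjk
    rcases Nat.eq_or_lt_of_le hjk with rfl | hlt
    · exact le_rfl
    · have h2 := ih (by omega) j (by omega)
      have h3 : emb.pos ⟨.u n, show n ≤ ℓ by omega⟩ < emb.pos ⟨.u (n+1), hk⟩ :=
        emb.topo (Euu (by omega))
      omega

lemma mono_v : ∀ (k : ℕ) (hk : k ≤ ℓ) (j : ℕ) (hjk : j ≤ k),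
    emb.pos ⟨.v j, le_trans hjk hk⟩ ≤ emb.pos ⟨.v k, hk⟩ := by
  intro k
  induction k with
  | zero =>
    intro hk j hjk
    obtain rfl : j = 0 := by omega
    exact le_rfl
  | succ n ih =>
    intro hk j hjk
    rcases Nat.eq_or_lt_of_le hjk with rfl | hlt
    · exact le_rfl
    · have h2 := ih (by omega) j (by omega)
      have h3 : emb.pos ⟨.v n, show n ≤ ℓ by omega⟩ < emb.pos ⟨.v (n+1), hk⟩ :=
        emb.topo (Evv (by omega))
      omega

lemma mono_w : ∀ (k : ℕ) (hk : k ≤ ℓ) (j : ℕ) (hjk : j ≤ k),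
    emb.pos ⟨.w j, le_trans hjk hk⟩ ≤ emb.pos ⟨.w k, hk⟩ := by
  intro k
  induction k with
  | zero =>
    intro hk j hjk
    obtain rfl : j = 0 := by omega
    exact le_rfl
  | succ n ih =>
    intro hk j hjk
    rcases Nat.eq_or_lt_of_le hjk with rfl | hlt
    · exact le_rfl
    · have h2 := ih (by omega) j (by omega)
      have h3 : emb.pos ⟨.w n, show n ≤ ℓ by omega⟩ < emb.pos ⟨.w (n+1), hk⟩ :=
        emb.topo (Eww (by omega))
      omega

-- everything at level ≥ i+1 lies above c
lemma high (i : ℕ) (hi : i < ℓ) (c : ℕ)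
    (hu : c < emb.pos ⟨.u (i+1), hi⟩) (hv : c < emb.pos ⟨.v (i+1), hi⟩)
    (hw : c < emb.pos ⟨.w (i+1), hi⟩) :
    ∀ (k : ℕ) (hk : k ≤ ℓ), i + 1 ≤ k →
      c < emb.pos ⟨.u k, hk⟩ ∧ c < emb.pos ⟨.v k, hk⟩ ∧ c < emb.pos ⟨.w k, hk⟩ := by
  intro k
  induction k with
  | zero => intro hk h; omega
  | succ n ih =>
    intro hk hik
    rcases Nat.eq_or_lt_of_le hik with heq | hlt
    · obtain rfl : i = n := by omega
      exact ⟨hu, hv, hw⟩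
    · have hnl : n ≤ ℓ := by omega
      obtain ⟨h1, h2, h3⟩ := ih hnl (by omega)
      have e1 : emb.pos ⟨.u n, hnl⟩ < emb.pos ⟨.u (n+1), hk⟩ := emb.topo (Euu (by omega))
      have e2 : emb.pos ⟨.v n, hnl⟩ < emb.pos ⟨.v (n+1), hk⟩ := emb.topo (Evv (by omega))
      have e3 : emb.pos ⟨.w n, hnl⟩ < emb.pos ⟨.w (n+1), hk⟩ := emb.topo (Eww (by omega))
      exact ⟨by omega, by omega, by omega⟩

-- Hmin for an interface at level i (c is the position of the maximum of triple i)
lemma hmin_at (i : ℕ) (hi : i < ℓ) (c : ℕ)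
    (hui : emb.pos ⟨.u i, hi.le⟩ ≤ c) (hvi : emb.pos ⟨.v i, hi.le⟩ ≤ c)
    (hwi : emb.pos ⟨.w i, hi.le⟩ ≤ c)
    (hu' : c < emb.pos ⟨.u (i+1), hi⟩) (hv' : c < emb.pos ⟨.v (i+1), hi⟩)
    (hw' : c < emb.pos ⟨.w (i+1), hi⟩) :
    ∀ x : DLVert ℓ, c < emb.pos x → x ≠ ⟨.u (i+1), hi⟩ → x ≠ ⟨.v (i+1), hi⟩ →
      x ≠ ⟨.w (i+1), hi⟩ → ∃ y, DLEdge ℓ y x ∧ c < emb.pos y := by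
  have H := high emb i hi c hu' hv' hw'
  intro x hx hne1 hne2 hne3
  obtain ⟨xv, hxv⟩ := x
  cases xv with
  | s1 =>
    exfalso
    have e1 : emb.pos ⟨.s1, trivial⟩ < emb.pos ⟨.u 0, Nat.zero_le ℓ⟩ := emb.topo Es1u
    have e2 := mono_u emb i hi.le 0 (Nat.zero_le i)
    omega
  | s2 =>
    exfalso
    have e1 : emb.pos ⟨.s2, trivial⟩ < emb.pos ⟨.w 0, Nat.zero_le ℓ⟩ := emb.topo Es2w
    have e2 := mono_w emb i hi.le 0 (Nat.zero_le i)
    omega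
  | t1 => exact ⟨⟨.u ℓ, le_rfl⟩, Eut1, (H ℓ le_rfl (by omega)).1⟩
  | t2 => exact ⟨⟨.w ℓ, le_rfl⟩, Ewt2, (H ℓ le_rfl (by omega)).2.2⟩
  | u j =>
    rcases Nat.lt_trichotomy j (i+1) with hj | hj | hj
    · exfalso
      have e2 := mono_u emb i hi.le j (by omega)
      omega
    · exact absurd (Subtype.ext (show DLV.u j = DLV.u (i+1) by rw [hj])) hne1
    · obtain ⟨n, rfl⟩ : ∃ n, j = n + 1 := ⟨j - 1, by omega⟩
      have hn : n + 1 ≤ ℓ := hxv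
      exact ⟨⟨.u n, show n ≤ ℓ by omega⟩, Euu (show n < ℓ by omega), (H n (by omega) (by omega)).1⟩
  | v j =>
    rcases Nat.lt_trichotomy j (i+1) with hj | hj | hj
    · exfalso
      have e2 := mono_v emb i hi.le j (by omega)
      omega
    · exact absurd (Subtype.ext (show DLV.v j = DLV.v (i+1) by rw [hj])) hne2
    · obtain ⟨n, rfl⟩ : ∃ n, j = n + 1 := ⟨j - 1, by omega⟩
      have hn : n + 1 ≤ ℓ := hxv
      exact ⟨⟨.v n, show n ≤ ℓ by omega⟩, Evv (show n < ℓ by omega), (H n (by omega) (by omega)).2.1⟩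
  | w j =>
    rcases Nat.lt_trichotomy j (i+1) with hj | hj | hj
    · exfalso
      have e2 := mono_w emb i hi.le j (by omega)
      omega
    · exact absurd (Subtype.ext (show DLV.w j = DLV.w (i+1) by rw [hj])) hne3
    · obtain ⟨n, rfl⟩ : ∃ n, j = n + 1 := ⟨j - 1, by omega⟩
      have hn : n + 1 ≤ ℓ := hxv
      exact ⟨⟨.w n, show n ≤ ℓ by omega⟩, Eww (show n < ℓ by omega), (H n (by omega) (by omega)).2.2⟩

-- the gadget above level k
lemma gadget (k : ℕ) (hk : k ≤ ℓ) :
    ∃ al be ga de : DLVert ℓ,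
      DLEdge ℓ ⟨.u k, hk⟩ al ∧ DLEdge ℓ ⟨.v k, hk⟩ al ∧
      DLEdge ℓ ⟨.v k, hk⟩ be ∧ DLEdge ℓ ⟨.w k, hk⟩ be ∧
      (ga ≠ be → DLEdge ℓ ⟨.w k, hk⟩ ga ∧ DLEdge ℓ ga de ∧ DLEdge ℓ be de) ∧
      (∀ x, DLEdge ℓ ⟨.w k, hk⟩ x → x = be ∨ x = ga) ∧
      (∀ x, DLEdge ℓ ⟨.v k, hk⟩ x → x = al ∨ x = be) ∧
      (∀ x, DLEdge ℓ ⟨.u k, hk⟩ x → x = al) ∧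
      al ≠ be ∧ (⟨.u k, hk⟩ : DLVert ℓ) ≠ be ∧ ga ≠ (⟨.v k, hk⟩ : DLVert ℓ) ∧
      al ≠ (⟨.w k, hk⟩ : DLVert ℓ) := by
  rcases Nat.eq_or_lt_of_le hk with rfl | hkl
  · -- k = ℓ
    refine ⟨⟨.t1, trivial⟩, ⟨.t2, trivial⟩, ⟨.t2, trivial⟩, ⟨.t2, trivial⟩,
      Eut1, Evt1, Evt2, Ewt2, fun h => absurd rfl h, ?_, ?_, ?_,
      vne (by simp), vne (by simp), vne (by simp), vne (by simp)⟩
    · intro x hx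
      rcases out_w x hx with ⟨h1, _⟩ | ⟨_, h2⟩
      · omega
      · exact Or.inl (Subtype.ext h2)
    · intro x hx
      rcases out_v x hx with ⟨h1, _⟩ | ⟨_, h2 | h2⟩
      · omega
      · exact Or.inl (Subtype.ext h2)
      · exact Or.inr (Subtype.ext h2)
    · intro x hx
      rcases out_u x hx with ⟨h1, _⟩ | ⟨_, h2⟩
      · omega
      · exact Subtype.ext h2
  · -- k < ℓ
    have hde : ∃ de : DLVert ℓ, DLEdge ℓ ⟨.w (k+1), hkl⟩ de ∧ DLEdge ℓ ⟨.v (k+1), hkl⟩ de := by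
      rcases Nat.eq_or_lt_of_le (Nat.succ_le_of_lt hkl) with heq | hlt
      · subst heq
        exact ⟨⟨.t2, trivial⟩, DLEdgeV.wt2, DLEdgeV.vt2⟩
      · exact ⟨⟨.v (k+2), hlt⟩, Ewv hlt, Evv hlt⟩
    obtain ⟨de, hde1, hde2⟩ := hde
    refine ⟨⟨.u (k+1), hkl⟩, ⟨.v (k+1), hkl⟩, ⟨.w (k+1), hkl⟩, de,
      Euu hkl, Evu hkl, Evv hkl, Ewv hkl,
      fun _ => ⟨Eww hkl, hde1, hde2⟩, ?_, ?_, ?_,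
      vne (by simp), vne (by simp), vne (by simp), vne (by simp)⟩
    · intro x hx
      rcases out_w x hx with ⟨h1, h2 | h2⟩ | ⟨h1, _⟩
      · exact Or.inl (Subtype.ext h2)
      · exact Or.inr (Subtype.ext h2)
      · omega
    · intro x hx
      rcases out_v x hx with ⟨h1, h2 | h2⟩ | ⟨h1, _⟩
      · exact Or.inl (Subtype.ext h2)
      · exact Or.inr (Subtype.ext h2)
      · omega
    · intro x hx
      rcases out_u x hx with ⟨h1, h2⟩ | ⟨h1, _⟩
      · exact Subtype.ext h2
      · omega

end DLP

namespace DLP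
open DLV
variable {ℓ : ℕ} (emb : TwoPageEmbedding (DLVert ℓ) (DLEdge ℓ))

lemma step_pos (i : ℕ) (hi : i < ℓ)
    (h12 : emb.Consec ⟨.u i, hi.le⟩ ⟨.v i, hi.le⟩)
    (h23 : emb.Consec ⟨.v i, hi.le⟩ ⟨.w i, hi.le⟩) :
    (emb.Consec ⟨.w (i+1), hi⟩ ⟨.v (i+1), hi⟩ ∧
      emb.Consec ⟨.v (i+1), hi⟩ ⟨.u (i+1), hi⟩) ∧
      (emb.pos ⟨.w i, hi.le⟩ < emb.pos ⟨.u (i+1), hi⟩ ∧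
       emb.pos ⟨.w i, hi.le⟩ < emb.pos ⟨.v (i+1), hi⟩ ∧
       emb.pos ⟨.w i, hi.le⟩ < emb.pos ⟨.w (i+1), hi⟩) := by
  obtain ⟨o12, g12⟩ := h12
  obtain ⟨o23, g23⟩ := h23
  have tu := emb.topo (Euu hi)
  have tvv := emb.topo (Evv hi)
  have tww := emb.topo (Eww hi)
  have hCC' : emb.pos ⟨.w i, hi.le⟩ < emb.pos ⟨.w (i+1), hi⟩ := tww
  have hCA' : emb.pos ⟨.w i, hi.le⟩ < emb.pos ⟨.u (i+1), hi⟩ := by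
    have hg1 := g12 ⟨.u (i+1), hi⟩
    have hg2 := g23 ⟨.u (i+1), hi⟩
    have p1 : emb.pos ⟨.u (i+1), hi⟩ ≠ emb.pos ⟨.v i, hi.le⟩ :=
      posne emb (vne (by simp))
    have p2 : emb.pos ⟨.u (i+1), hi⟩ ≠ emb.pos ⟨.w i, hi.le⟩ :=
      posne emb (vne (by simp))
    omega
  have hCB' : emb.pos ⟨.w i, hi.le⟩ < emb.pos ⟨.v (i+1), hi⟩ := by
    have hg2 := g23 ⟨.v (i+1), hi⟩
    have p2 : emb.pos ⟨.v (i+1), hi⟩ ≠ emb.pos ⟨.w i, hi.le⟩ :=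
      posne emb (vne (by simp))
    omega
  obtain ⟨Lv, hLE, hL1, hL2⟩ :
      ∃ Lv, DLEdge ℓ Lv ⟨.w i, hi.le⟩ ∧ Lv ≠ ⟨.u i, hi.le⟩ ∧ Lv ≠ ⟨.v i, hi.le⟩ := by
    cases i with
    | zero => exact ⟨⟨.s2, trivial⟩, Es2w, vne (by simp), vne (by simp)⟩
    | succ n =>
      exact ⟨⟨.w n, show n ≤ ℓ by omega⟩, Eww (show n < ℓ by omega),
        vne (by simp), vne (by simp)⟩
  have hLC := emb.topo hLE
  have hLA : emb.pos Lv < emb.pos ⟨.u i, hi.le⟩ := by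
    have hg1 := g12 Lv
    have hg2 := g23 Lv
    have p1 := posne emb hL1
    have p2 := posne emb hL2
    omega
  obtain ⟨al, be, ga, de, hf1, hf2, hf3, hf4, hga, houtW, houtV, houtU,
    halbe, hube, hgav, halw⟩ := gadget (i+1) hi
  have hmin := hmin_at emb i hi (emb.pos ⟨.w i, hi.le⟩) (by omega) (by omega)
    le_rfl hCA' hCB' hCC'
  obtain ⟨r1, r2, r3, r4⟩ := engine_pos emb Lv ⟨.u i, hi.le⟩ ⟨.v i, hi.le⟩
    ⟨.w i, hi.le⟩ ⟨.u (i+1), hi⟩ ⟨.v (i+1), hi⟩ ⟨.w (i+1), hi⟩ al be ga de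
    hLE (Euu hi) (Evv hi) (Eww hi) hf1 hf2 hf3 hf4 hga houtW houtV
    hLA o12 o23 hCA' hCB' hCC' hmin (vne (by simp)) (vne (by simp))
    (vne (by simp)) halbe hube hgav
  exact ⟨⟨⟨r1, r3⟩, ⟨r2, r4⟩⟩, hCA', hCB', hCC'⟩

lemma step_neg (i : ℕ) (hi : i < ℓ)
    (h12 : emb.Consec ⟨.w i, hi.le⟩ ⟨.v i, hi.le⟩)
    (h23 : emb.Consec ⟨.v i, hi.le⟩ ⟨.u i, hi.le⟩) :
    (emb.Consec ⟨.u (i+1), hi⟩ ⟨.v (i+1), hi⟩ ∧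
      emb.Consec ⟨.v (i+1), hi⟩ ⟨.w (i+1), hi⟩) ∧
      (emb.pos ⟨.u i, hi.le⟩ < emb.pos ⟨.u (i+1), hi⟩ ∧
       emb.pos ⟨.u i, hi.le⟩ < emb.pos ⟨.v (i+1), hi⟩ ∧
       emb.pos ⟨.u i, hi.le⟩ < emb.pos ⟨.w (i+1), hi⟩) := by
  obtain ⟨o12, g12⟩ := h12
  obtain ⟨o23, g23⟩ := h23
  have tu := emb.topo (Euu hi)
  have tvv := emb.topo (Evv hi)
  have tww := emb.topo (Eww hi)
  have hCP1 : emb.pos ⟨.u i, hi.le⟩ < emb.pos ⟨.u (i+1), hi⟩ := tu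
  have hCP2 : emb.pos ⟨.u i, hi.le⟩ < emb.pos ⟨.v (i+1), hi⟩ := by
    have hg2 := g23 ⟨.v (i+1), hi⟩
    have p2 : emb.pos ⟨.v (i+1), hi⟩ ≠ emb.pos ⟨.u i, hi.le⟩ :=
      posne emb (vne (by simp))
    omega
  have hCP3 : emb.pos ⟨.u i, hi.le⟩ < emb.pos ⟨.w (i+1), hi⟩ := by
    have hg1 := g12 ⟨.w (i+1), hi⟩
    have hg2 := g23 ⟨.w (i+1), hi⟩
    have p1 : emb.pos ⟨.w (i+1), hi⟩ ≠ emb.pos ⟨.v i, hi.le⟩ :=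
      posne emb (vne (by simp))
    have p2 : emb.pos ⟨.w (i+1), hi⟩ ≠ emb.pos ⟨.u i, hi.le⟩ :=
      posne emb (vne (by simp))
    omega
  obtain ⟨Lv, hLE, hL1, hL2⟩ :
      ∃ Lv, DLEdge ℓ Lv ⟨.u i, hi.le⟩ ∧ Lv ≠ ⟨.w i, hi.le⟩ ∧ Lv ≠ ⟨.v i, hi.le⟩ := by
    cases i with
    | zero => exact ⟨⟨.s1, trivial⟩, Es1u, vne (by simp), vne (by simp)⟩
    | succ n =>
      exact ⟨⟨.v n, show n ≤ ℓ by omega⟩, Evu (show n < ℓ by omega),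
        vne (by simp), vne (by simp)⟩
  have hLC := emb.topo hLE
  have hLA : emb.pos Lv < emb.pos ⟨.w i, hi.le⟩ := by
    have hg1 := g12 Lv
    have hg2 := g23 Lv
    have p1 := posne emb hL1
    have p2 := posne emb hL2
    omega
  obtain ⟨al, be, ga, de, hf1, hf2, hf3, hf4, hga, houtW, houtV, houtU,
    halbe, hube, hgav, halw⟩ := gadget (i+1) hi
  have hmin := hmin_at emb i hi (emb.pos ⟨.u i, hi.le⟩) le_rfl (by omega)
    (by omega) hCP1 hCP2 hCP3
  obtain ⟨r1, r2, r3, r4⟩ := engine_neg emb Lv ⟨.w i, hi.le⟩ ⟨.v i, hi.le⟩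
    ⟨.u i, hi.le⟩ ⟨.u (i+1), hi⟩ ⟨.v (i+1), hi⟩ ⟨.w (i+1), hi⟩ al be
    hLE (Evu hi) (Evv hi) (Ewv hi) (Eww hi) hf1 hf2 hf3 hf4 houtU houtV
    hLA o12 o23 hCP1 hCP2 hCP3 hmin (vne (by simp)) (vne (by simp))
    (vne (by simp)) halbe halw
  exact ⟨⟨⟨r1, r3⟩, ⟨r2, r4⟩⟩, hCP1, hCP2, hCP3⟩

end DLP

namespace DLP
open DLV
variable {ℓ : ℕ} (emb : TwoPageEmbedding (DLVert ℓ) (DLEdge ℓ))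

lemma gadget0 (hl : 0 < ℓ) : ∃ de eps : DLVert ℓ,
    DLEdge ℓ ⟨.v 1, hl⟩ eps ∧ DLEdge ℓ ⟨.u 1, hl⟩ eps ∧
    DLEdge ℓ ⟨.w 1, hl⟩ de ∧ DLEdge ℓ ⟨.v 1, hl⟩ de := by
  rcases Nat.lt_or_ge 1 ℓ with h2 | h2
  · exact ⟨⟨.v 2, h2⟩, ⟨.u 2, h2⟩, Evu h2, Euu h2, Ewv h2, Evv h2⟩
  · obtain rfl : ℓ = 1 := by omega
    exact ⟨⟨.t2, trivial⟩, ⟨.t1, trivial⟩, Evt1, Eut1, Ewt2, Evt2⟩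

set_option maxHeartbeats 1000000 in
lemma kill_s1u0 (hl : 0 < ℓ)
    (hs1 : emb.pos ⟨.s1, trivial⟩ < emb.pos ⟨.u 0, Nat.zero_le ℓ⟩)
    (hm : ∀ x : DLVert ℓ, x ≠ ⟨.s1, trivial⟩ → x ≠ ⟨.u 0, Nat.zero_le ℓ⟩ →
      emb.pos ⟨.u 0, Nat.zero_le ℓ⟩ < emb.pos x) : False := by
  obtain ⟨de, eps, hve, hue, hwd, hvd⟩ := gadget0 (ℓ := ℓ) hl
  have Euu0 : DLEdge ℓ ⟨.u 0, Nat.zero_le ℓ⟩ ⟨.u 1, hl⟩ := Euu hl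
  have Evu0 : DLEdge ℓ ⟨.v 0, Nat.zero_le ℓ⟩ ⟨.u 1, hl⟩ := Evu hl
  have Evv0 : DLEdge ℓ ⟨.v 0, Nat.zero_le ℓ⟩ ⟨.v 1, hl⟩ := Evv hl
  have Ewv0 : DLEdge ℓ ⟨.w 0, Nat.zero_le ℓ⟩ ⟨.v 1, hl⟩ := Ewv hl
  have Eww0 : DLEdge ℓ ⟨.w 0, Nat.zero_le ℓ⟩ ⟨.w 1, hl⟩ := Eww hl
  have hS2 := hm ⟨.s2, trivial⟩ (vne (by simp)) (vne (by simp))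
  have hV0 := hm ⟨.v 0, Nat.zero_le ℓ⟩ (vne (by simp)) (vne (by simp))
  have hW0 := hm ⟨.w 0, Nat.zero_le ℓ⟩ (vne (by simp)) (vne (by simp))
  have hU1 := hm ⟨.u 1, hl⟩ (vne (by simp)) (vne (by simp))
  have hV1 := hm ⟨.v 1, hl⟩ (vne (by simp)) (vne (by simp))
  have hW1 := hm ⟨.w 1, hl⟩ (vne (by simp)) (vne (by simp))
  have ts1v0 := emb.topo (Es1v (ℓ := ℓ))
  have ts2v0 := emb.topo (Es2v (ℓ := ℓ))
  have ts2w0 := emb.topo (Es2w (ℓ := ℓ))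
  have tuu : emb.pos ⟨.u 0, Nat.zero_le ℓ⟩ < emb.pos ⟨.u 1, hl⟩ := emb.topo Euu0
  have tvu : emb.pos ⟨.v 0, Nat.zero_le ℓ⟩ < emb.pos ⟨.u 1, hl⟩ := emb.topo Evu0
  have tvv : emb.pos ⟨.v 0, Nat.zero_le ℓ⟩ < emb.pos ⟨.v 1, hl⟩ := emb.topo Evv0
  have twv : emb.pos ⟨.w 0, Nat.zero_le ℓ⟩ < emb.pos ⟨.v 1, hl⟩ := emb.topo Ewv0
  have tww : emb.pos ⟨.w 0, Nat.zero_le ℓ⟩ < emb.pos ⟨.w 1, hl⟩ := emb.topo Eww0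
  have tvX : emb.pos ⟨.v 1, hl⟩ < emb.pos eps := emb.topo hve
  have tuX : emb.pos ⟨.u 1, hl⟩ < emb.pos eps := emb.topo hue
  have twY : emb.pos ⟨.w 1, hl⟩ < emb.pos de := emb.topo hwd
  have tvY : emb.pos ⟨.v 1, hl⟩ < emb.pos de := emb.topo hvd
  rcases Nat.lt_trichotomy (emb.pos ⟨.v 0, Nat.zero_le ℓ⟩)
      (emb.pos ⟨.w 0, Nat.zero_le ℓ⟩) with h1 | h1 | h1
  · rcases Nat.lt_trichotomy (emb.pos ⟨.u 1, hl⟩)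
        (emb.pos ⟨.w 0, Nat.zero_le ℓ⟩) with h2 | h2 | h2
    · exact bool3 (Ne.symm (cne emb Es1v Euu0 (by omega) (by omega) (by omega)))
        (cne emb Es1v Es2w (by omega) (by omega) (by omega))
        (Ne.symm (cne emb Euu0 Es2w (by omega) (by omega) (by omega)))
    · exact posne emb (vne (by simp)) h2
    · rcases Nat.lt_trichotomy (emb.pos ⟨.u 1, hl⟩) (emb.pos ⟨.v 1, hl⟩) with h3 | h3 | h3
      · exact bool5 (cne emb Evu0 Ewv0 (by omega) (by omega) (by omega))
          (Ne.symm (cne emb Euu0 Ewv0 (by omega) (by omega) (by omega)))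
          (Ne.symm (cne emb Es1v Euu0 (by omega) (by omega) (by omega)))
          (cne emb Es1v Es2w (by omega) (by omega) (by omega))
          (cne emb Es2w Evu0 (by omega) (by omega) (by omega))
      · exact posne emb (vne (by simp)) h3
      · exact bool5 (cne emb Evu0 hve (by omega) (by omega) (by omega))
          (Ne.symm (cne emb Euu0 hve (by omega) (by omega) (by omega)))
          (Ne.symm (cne emb Es1v Euu0 (by omega) (by omega) (by omega)))
          (cne emb Es1v Es2w (by omega) (by omega) (by omega))
          (cne emb Es2w Evu0 (by omega) (by omega) (by omega))
  · exact posne emb (vne (by simp)) h1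
  · rcases Nat.lt_trichotomy (emb.pos ⟨.v 0, Nat.zero_le ℓ⟩) (emb.pos ⟨.w 1, hl⟩)
        with h2 | h2 | h2
    · rcases Nat.lt_trichotomy (emb.pos ⟨.u 1, hl⟩) (emb.pos ⟨.v 1, hl⟩) with h3 | h3 | h3
      · exact bool3 (Ne.symm (cne emb Es1v Ewv0 (by omega) (by omega) (by omega)))
          (cne emb Es1v Euu0 (by omega) (by omega) (by omega))
          (cne emb Euu0 Ewv0 (by omega) (by omega) (by omega))
      · exact posne emb (vne (by simp)) h3
      · exact bool5 (Ne.symm (cne emb Evu0 hve (by omega) (by omega) (by omega)))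
          (Ne.symm (cne emb Ewv0 Evu0 (by omega) (by omega) (by omega)))
          (Ne.symm (cne emb Es1v Ewv0 (by omega) (by omega) (by omega)))
          (cne emb Es1v Euu0 (by omega) (by omega) (by omega))
          (cne emb Euu0 hve (by omega) (by omega) (by omega))
    · exact posne emb (vne (by simp)) h2
    · exact bool3 (Ne.symm (cne emb Es1v hwd (by omega) (by omega) (by omega)))
        (cne emb Es1v Ewv0 (by omega) (by omega) (by omega))
        (cne emb Ewv0 hwd (by omega) (by omega) (by omega))

set_option maxHeartbeats 1000000 in
lemma kill_s2w0 (hl : 0 < ℓ)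
    (hs2 : emb.pos ⟨.s2, trivial⟩ < emb.pos ⟨.w 0, Nat.zero_le ℓ⟩)
    (hm : ∀ x : DLVert ℓ, x ≠ ⟨.s2, trivial⟩ → x ≠ ⟨.w 0, Nat.zero_le ℓ⟩ →
      emb.pos ⟨.w 0, Nat.zero_le ℓ⟩ < emb.pos x) : False := by
  obtain ⟨de, eps, hve, hue, hwd, hvd⟩ := gadget0 (ℓ := ℓ) hl
  have Euu0 : DLEdge ℓ ⟨.u 0, Nat.zero_le ℓ⟩ ⟨.u 1, hl⟩ := Euu hl
  have Evu0 : DLEdge ℓ ⟨.v 0, Nat.zero_le ℓ⟩ ⟨.u 1, hl⟩ := Evu hl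
  have Evv0 : DLEdge ℓ ⟨.v 0, Nat.zero_le ℓ⟩ ⟨.v 1, hl⟩ := Evv hl
  have Ewv0 : DLEdge ℓ ⟨.w 0, Nat.zero_le ℓ⟩ ⟨.v 1, hl⟩ := Ewv hl
  have Eww0 : DLEdge ℓ ⟨.w 0, Nat.zero_le ℓ⟩ ⟨.w 1, hl⟩ := Eww hl
  have hS1 := hm ⟨.s1, trivial⟩ (vne (by simp)) (vne (by simp))
  have hV0 := hm ⟨.v 0, Nat.zero_le ℓ⟩ (vne (by simp)) (vne (by simp))
  have hU0 := hm ⟨.u 0, Nat.zero_le ℓ⟩ (vne (by simp)) (vne (by simp))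
  have hU1 := hm ⟨.u 1, hl⟩ (vne (by simp)) (vne (by simp))
  have hV1 := hm ⟨.v 1, hl⟩ (vne (by simp)) (vne (by simp))
  have hW1 := hm ⟨.w 1, hl⟩ (vne (by simp)) (vne (by simp))
  have ts1u0 := emb.topo (Es1u (ℓ := ℓ))
  have ts1v0 := emb.topo (Es1v (ℓ := ℓ))
  have ts2v0 := emb.topo (Es2v (ℓ := ℓ))
  have tuu : emb.pos ⟨.u 0, Nat.zero_le ℓ⟩ < emb.pos ⟨.u 1, hl⟩ := emb.topo Euu0
  have tvu : emb.pos ⟨.v 0, Nat.zero_le ℓ⟩ < emb.pos ⟨.u 1, hl⟩ := emb.topo Evu0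
  have tvv : emb.pos ⟨.v 0, Nat.zero_le ℓ⟩ < emb.pos ⟨.v 1, hl⟩ := emb.topo Evv0
  have twv : emb.pos ⟨.w 0, Nat.zero_le ℓ⟩ < emb.pos ⟨.v 1, hl⟩ := emb.topo Ewv0
  have tww : emb.pos ⟨.w 0, Nat.zero_le ℓ⟩ < emb.pos ⟨.w 1, hl⟩ := emb.topo Eww0
  have tvX : emb.pos ⟨.v 1, hl⟩ < emb.pos eps := emb.topo hve
  have tuX : emb.pos ⟨.u 1, hl⟩ < emb.pos eps := emb.topo hue
  have twY : emb.pos ⟨.w 1, hl⟩ < emb.pos de := emb.topo hwd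
  have tvY : emb.pos ⟨.v 1, hl⟩ < emb.pos de := emb.topo hvd
  rcases Nat.lt_trichotomy (emb.pos ⟨.u 0, Nat.zero_le ℓ⟩)
      (emb.pos ⟨.v 0, Nat.zero_le ℓ⟩) with h1 | h1 | h1
  · rcases Nat.lt_trichotomy (emb.pos ⟨.v 0, Nat.zero_le ℓ⟩) (emb.pos ⟨.w 1, hl⟩)
        with h2 | h2 | h2
    · rcases Nat.lt_trichotomy (emb.pos ⟨.u 1, hl⟩) (emb.pos ⟨.v 1, hl⟩) with h3 | h3 | h3
      · exact bool5 (cne emb Ewv0 hue (by omega) (by omega) (by omega))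
          (Ne.symm (cne emb Evv0 hue (by omega) (by omega) (by omega)))
          (Ne.symm (cne emb Euu0 Evv0 (by omega) (by omega) (by omega)))
          (Ne.symm (cne emb Es2v Euu0 (by omega) (by omega) (by omega)))
          (cne emb Es2v Ewv0 (by omega) (by omega) (by omega))
      · exact posne emb (vne (by simp)) h3
      · exact bool3 (cne emb Ewv0 Euu0 (by omega) (by omega) (by omega))
          (Ne.symm (cne emb Es2v Euu0 (by omega) (by omega) (by omega)))
          (cne emb Es2v Ewv0 (by omega) (by omega) (by omega))
    · exact posne emb (vne (by simp)) h2
    · exact bool3 (Ne.symm (cne emb Es2v hwd (by omega) (by omega) (by omega)))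
        (cne emb Es2v Ewv0 (by omega) (by omega) (by omega))
        (cne emb Ewv0 hwd (by omega) (by omega) (by omega))
  · exact posne emb (vne (by simp)) h1
  · rcases Nat.lt_trichotomy (emb.pos ⟨.u 0, Nat.zero_le ℓ⟩) (emb.pos ⟨.v 1, hl⟩)
        with h2 | h2 | h2
    · rcases Nat.lt_trichotomy (emb.pos ⟨.v 0, Nat.zero_le ℓ⟩) (emb.pos ⟨.w 1, hl⟩)
          with h3 | h3 | h3
      · rcases Nat.lt_trichotomy (emb.pos ⟨.u 0, Nat.zero_le ℓ⟩) (emb.pos ⟨.w 1, hl⟩)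
            with h4 | h4 | h4
        · rcases Nat.lt_trichotomy (emb.pos ⟨.u 1, hl⟩) (emb.pos ⟨.v 1, hl⟩)
              with h5 | h5 | h5
          · exact bool5 (cne emb Ewv0 hue (by omega) (by omega) (by omega))
              (Ne.symm (cne emb Evv0 hue (by omega) (by omega) (by omega)))
              (Ne.symm (cne emb Es1u Evv0 (by omega) (by omega) (by omega)))
              (Ne.symm (cne emb Es2v Es1u (by omega) (by omega) (by omega)))
              (cne emb Es2v Ewv0 (by omega) (by omega) (by omega))
          · exact posne emb (vne (by simp)) h5
          · exact bool5 (Ne.symm (cne emb Euu0 hve (by omega) (by omega) (by omega)))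
              (Ne.symm (cne emb Evv0 Euu0 (by omega) (by omega) (by omega)))
              (Ne.symm (cne emb Es1u Evv0 (by omega) (by omega) (by omega)))
              (cne emb Es1u Evu0 (by omega) (by omega) (by omega))
              (cne emb Evu0 hve (by omega) (by omega) (by omega))
        · exact posne emb (vne (by simp)) h4
        · exact bool3 (Ne.symm (cne emb Es1u hwd (by omega) (by omega) (by omega)))
            (cne emb Es1u Evv0 (by omega) (by omega) (by omega))
            (cne emb Evv0 hwd (by omega) (by omega) (by omega))
      · exact posne emb (vne (by simp)) h3
      · exact bool3 (Ne.symm (cne emb Es2v hwd (by omega) (by omega) (by omega)))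
          (cne emb Es2v Ewv0 (by omega) (by omega) (by omega))
          (cne emb Ewv0 hwd (by omega) (by omega) (by omega))
    · exact posne emb (vne (by simp)) h2
    · exact bool3 (Ne.symm (cne emb Es1u hve (by omega) (by omega) (by omega)))
        (cne emb Es1u Evu0 (by omega) (by omega) (by omega))
        (cne emb Evu0 hve (by omega) (by omega) (by omega))

lemma hmin0 (c : ℕ)
    (hs1c : emb.pos ⟨.s1, trivial⟩ ≤ c) (hs2c : emb.pos ⟨.s2, trivial⟩ ≤ c)
    (hall : ∀ x : DLVert ℓ, x.val ≠ .s1 → x.val ≠ .s2 → c < emb.pos x) :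
    ∀ x : DLVert ℓ, c < emb.pos x → x ≠ ⟨.u 0, Nat.zero_le ℓ⟩ →
      x ≠ ⟨.v 0, Nat.zero_le ℓ⟩ → x ≠ ⟨.w 0, Nat.zero_le ℓ⟩ →
      ∃ y, DLEdge ℓ y x ∧ c < emb.pos y := by
  intro x hx h1 h2 h3
  obtain ⟨xv, hxv⟩ := x
  cases xv with
  | s1 => exfalso; omega
  | s2 => exfalso; omega
  | t1 => exact ⟨⟨.u ℓ, le_rfl⟩, Eut1, hall _ (by simp) (by simp)⟩
  | t2 => exact ⟨⟨.w ℓ, le_rfl⟩, Ewt2, hall _ (by simp) (by simp)⟩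
  | u j =>
    cases j with
    | zero => exact absurd rfl h1
    | succ n =>
      have hn : n + 1 ≤ ℓ := hxv
      exact ⟨⟨.u n, show n ≤ ℓ by omega⟩, Euu (show n < ℓ by omega),
        hall _ (by simp) (by simp)⟩
  | v j =>
    cases j with
    | zero => exact absurd rfl h2
    | succ n =>
      have hn : n + 1 ≤ ℓ := hxv
      exact ⟨⟨.v n, show n ≤ ℓ by omega⟩, Evv (show n < ℓ by omega),
        hall _ (by simp) (by simp)⟩
  | w j =>
    cases j with
    | zero => exact absurd rfl h3
    | succ n =>
      have hn : n + 1 ≤ ℓ := hxv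
      exact ⟨⟨.w n, show n ≤ ℓ by omega⟩, Eww (show n < ℓ by omega),
        hall _ (by simp) (by simp)⟩

end DLP

namespace DLP
open DLV
variable {ℓ : ℕ} (emb : TwoPageEmbedding (DLVert ℓ) (DLEdge ℓ))

set_option maxHeartbeats 1000000 in
lemma base0 (hl : 0 < ℓ) :
    (emb.Consec ⟨.u 0, Nat.zero_le ℓ⟩ ⟨.v 0, Nat.zero_le ℓ⟩ ∧
      emb.Consec ⟨.v 0, Nat.zero_le ℓ⟩ ⟨.w 0, Nat.zero_le ℓ⟩) ∨
    (emb.Consec ⟨.w 0, Nat.zero_le ℓ⟩ ⟨.v 0, Nat.zero_le ℓ⟩ ∧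
      emb.Consec ⟨.v 0, Nat.zero_le ℓ⟩ ⟨.u 0, Nat.zero_le ℓ⟩) := by
  obtain ⟨de, eps, hve, hue, hwd, hvd⟩ := gadget0 (ℓ := ℓ) hl
  have Euu0 : DLEdge ℓ ⟨.u 0, Nat.zero_le ℓ⟩ ⟨.u 1, hl⟩ := Euu hl
  have Evu0 : DLEdge ℓ ⟨.v 0, Nat.zero_le ℓ⟩ ⟨.u 1, hl⟩ := Evu hl
  have Evv0 : DLEdge ℓ ⟨.v 0, Nat.zero_le ℓ⟩ ⟨.v 1, hl⟩ := Evv hl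
  have Ewv0 : DLEdge ℓ ⟨.w 0, Nat.zero_le ℓ⟩ ⟨.v 1, hl⟩ := Ewv hl
  have Eww0 : DLEdge ℓ ⟨.w 0, Nat.zero_le ℓ⟩ ⟨.w 1, hl⟩ := Eww hl
  have houtW0 : ∀ x, DLEdge ℓ ⟨.w 0, Nat.zero_le ℓ⟩ x →
      x = (⟨.v 1, hl⟩ : DLVert ℓ) ∨ x = ⟨.w 1, hl⟩ := by
    intro x hx
    rcases out_w x hx with ⟨h1, h2 | h2⟩ | ⟨h1, _⟩
    · exact Or.inl (Subtype.ext h2)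
    · exact Or.inr (Subtype.ext h2)
    · omega
  have houtV0 : ∀ x, DLEdge ℓ ⟨.v 0, Nat.zero_le ℓ⟩ x →
      x = (⟨.u 1, hl⟩ : DLVert ℓ) ∨ x = ⟨.v 1, hl⟩ := by
    intro x hx
    rcases out_v x hx with ⟨h1, h2 | h2⟩ | ⟨h1, _⟩
    · exact Or.inl (Subtype.ext h2)
    · exact Or.inr (Subtype.ext h2)
    · omega
  have houtU0 : ∀ x, DLEdge ℓ ⟨.u 0, Nat.zero_le ℓ⟩ x →
      x = (⟨.u 1, hl⟩ : DLVert ℓ) := by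
    intro x hx
    rcases out_u x hx with ⟨h1, h2⟩ | ⟨h1, _⟩
    · exact Subtype.ext h2
    · omega
  -- global minimum is a source
  obtain ⟨m1, -, hm1min⟩ := exists_min emb Set.univ ⟨⟨.s1, trivial⟩, trivial⟩
  have hm1s : m1.val = DLV.s1 ∨ m1.val = DLV.s2 := by
    by_contra hc
    push_neg at hc
    obtain ⟨y, hy⟩ := has_in m1 hc.1 hc.2
    have h1 := emb.topo hy
    have h2 := hm1min y trivial
    omega
  rcases hm1s with hs | hs
  · -- m1 = s1
    have hm1 : m1 = (⟨.s1, trivial⟩ : DLVert ℓ) := Subtype.ext hs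
    rw [hm1] at hm1min
    obtain ⟨m2, hm2S, hm2min⟩ := exists_min emb
      {x | x ≠ (⟨.s1, trivial⟩ : DLVert ℓ)} ⟨⟨.s2, trivial⟩, vne (by simp)⟩
    have hm1m2 : emb.pos ⟨.s1, trivial⟩ < emb.pos m2 :=
      Nat.lt_of_le_of_ne (hm1min m2 trivial) (posne emb (fun h => hm2S h.symm))
    have key : ∀ y, DLEdge ℓ y m2 → y = (⟨.s1, trivial⟩ : DLVert ℓ) := by
      intro y hy
      by_contra hne
      have h1 := emb.topo hy
      have h2 := hm2min y hne
      omega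
    have htwo : ∀ x : DLVert ℓ, x ≠ ⟨.s1, trivial⟩ → x ≠ m2 → emb.pos m2 < emb.pos x := by
      intro x hx1 hx2
      exact Nat.lt_of_le_of_ne (hm2min x hx1) (posne emb (Ne.symm hx2))
    have hm2cases : m2 = (⟨.s2, trivial⟩ : DLVert ℓ) ∨ m2 = ⟨.u 0, Nat.zero_le ℓ⟩ := by
      obtain ⟨xv, hxv⟩ := m2
      cases xv with
      | s1 => exact absurd rfl hm2S
      | s2 => exact Or.inl rfl
      | t1 =>
        have := key ⟨.u ℓ, le_rfl⟩ Eut1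
        exact absurd (congrArg Subtype.val this) (by simp)
      | t2 =>
        have := key ⟨.w ℓ, le_rfl⟩ Ewt2
        exact absurd (congrArg Subtype.val this) (by simp)
      | u j =>
        cases j with
        | zero => exact Or.inr rfl
        | succ n =>
          have hn : n + 1 ≤ ℓ := hxv
          have := key ⟨.u n, show n ≤ ℓ by omega⟩ (Euu (show n < ℓ by omega))
          exact absurd (congrArg Subtype.val this) (by simp)
      | v j =>
        cases j with
        | zero =>
          have := key ⟨.s2, trivial⟩ Es2v
          exact absurd (congrArg Subtype.val this) (by simp)
        | succ n =>
          have hn : n + 1 ≤ ℓ := hxv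
          have := key ⟨.v n, show n ≤ ℓ by omega⟩ (Evv (show n < ℓ by omega))
          exact absurd (congrArg Subtype.val this) (by simp)
      | w j =>
        cases j with
        | zero =>
          have := key ⟨.s2, trivial⟩ Es2w
          exact absurd (congrArg Subtype.val this) (by simp)
        | succ n =>
          have hn : n + 1 ≤ ℓ := hxv
          have := key ⟨.w n, show n ≤ ℓ by omega⟩ (Eww (show n < ℓ by omega))
          exact absurd (congrArg Subtype.val this) (by simp)
    rcases hm2cases with h | h
    · -- two smallest are s1 < s2 : apply the base engine, pattern u0 v0 w0
      rw [h] at htwo hm1m2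
      have hall : ∀ x : DLVert ℓ, x.val ≠ DLV.s1 → x.val ≠ DLV.s2 →
          emb.pos ⟨.s2, trivial⟩ < emb.pos x := by
        intro x hx1 hx2
        exact htwo x (fun he => hx1 (congrArg Subtype.val he))
          (fun he => hx2 (congrArg Subtype.val he))
      have hmin := hmin0 emb (emb.pos ⟨.s2, trivial⟩) hm1m2.le le_rfl hall
      have htwo' : ∀ x : DLVert ℓ, x ≠ ⟨.s1, trivial⟩ → x ≠ ⟨.s2, trivial⟩ →
          emb.pos ⟨.s2, trivial⟩ < emb.pos x := htwo
      obtain ⟨r1, r2, r3, r4⟩ := engine_base emb ⟨.s1, trivial⟩ ⟨.s2, trivial⟩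
        ⟨.u 0, Nat.zero_le ℓ⟩ ⟨.v 0, Nat.zero_le ℓ⟩ ⟨.w 0, Nat.zero_le ℓ⟩
        ⟨.u 1, hl⟩ ⟨.v 1, hl⟩ ⟨.w 1, hl⟩ de eps
        Es1u Es1v Es2v Es2w Euu0 Evu0 Evv0 Ewv0 hve hue
        (fun _ => ⟨Eww0, hwd, hvd⟩) houtW0 houtV0
        hm1m2 htwo' hmin
        (vne (by simp)) (vne (by simp)) (vne (by simp)) (vne (by simp))
        (vne (by simp)) (vne (by simp)) (vne (by simp)) (vne (by simp))
        (vne (by simp)) (vne (by simp))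
      exact Or.inr ⟨⟨r1, r3⟩, ⟨r2, r4⟩⟩
    · -- second smallest is u 0 : impossible
      rw [h] at htwo hm1m2
      exact absurd (kill_s1u0 emb hl hm1m2 htwo) id
  · -- m1 = s2 (mirror)
    have hm1 : m1 = (⟨.s2, trivial⟩ : DLVert ℓ) := Subtype.ext hs
    rw [hm1] at hm1min
    obtain ⟨m2, hm2S, hm2min⟩ := exists_min emb
      {x | x ≠ (⟨.s2, trivial⟩ : DLVert ℓ)} ⟨⟨.s1, trivial⟩, vne (by simp)⟩
    have hm1m2 : emb.pos ⟨.s2, trivial⟩ < emb.pos m2 :=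
      Nat.lt_of_le_of_ne (hm1min m2 trivial) (posne emb (fun h => hm2S h.symm))
    have key : ∀ y, DLEdge ℓ y m2 → y = (⟨.s2, trivial⟩ : DLVert ℓ) := by
      intro y hy
      by_contra hne
      have h1 := emb.topo hy
      have h2 := hm2min y hne
      omega
    have htwo : ∀ x : DLVert ℓ, x ≠ ⟨.s2, trivial⟩ → x ≠ m2 → emb.pos m2 < emb.pos x := by
      intro x hx1 hx2
      exact Nat.lt_of_le_of_ne (hm2min x hx1) (posne emb (Ne.symm hx2))
    have hm2cases : m2 = (⟨.s1, trivial⟩ : DLVert ℓ) ∨ m2 = ⟨.w 0, Nat.zero_le ℓ⟩ := by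
      obtain ⟨xv, hxv⟩ := m2
      cases xv with
      | s2 => exact absurd rfl hm2S
      | s1 => exact Or.inl rfl
      | t1 =>
        have := key ⟨.u ℓ, le_rfl⟩ Eut1
        exact absurd (congrArg Subtype.val this) (by simp)
      | t2 =>
        have := key ⟨.w ℓ, le_rfl⟩ Ewt2
        exact absurd (congrArg Subtype.val this) (by simp)
      | u j =>
        cases j with
        | zero =>
          have := key ⟨.s1, trivial⟩ Es1u
          exact absurd (congrArg Subtype.val this) (by simp)
        | succ n =>
          have hn : n + 1 ≤ ℓ := hxv
          have := key ⟨.u n, show n ≤ ℓ by omega⟩ (Euu (show n < ℓ by omega))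
          exact absurd (congrArg Subtype.val this) (by simp)
      | v j =>
        cases j with
        | zero =>
          have := key ⟨.s1, trivial⟩ Es1v
          exact absurd (congrArg Subtype.val this) (by simp)
        | succ n =>
          have hn : n + 1 ≤ ℓ := hxv
          have := key ⟨.v n, show n ≤ ℓ by omega⟩ (Evv (show n < ℓ by omega))
          exact absurd (congrArg Subtype.val this) (by simp)
      | w j =>
        cases j with
        | zero => exact Or.inr rfl
        | succ n =>
          have hn : n + 1 ≤ ℓ := hxv
          have := key ⟨.w n, show n ≤ ℓ by omega⟩ (Eww (show n < ℓ by omega))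
          exact absurd (congrArg Subtype.val this) (by simp)
    rcases hm2cases with h | h
    · -- two smallest are s2 < s1 : base engine, pattern w0 v0 u0
      rw [h] at htwo hm1m2
      have hall : ∀ x : DLVert ℓ, x.val ≠ DLV.s1 → x.val ≠ DLV.s2 →
          emb.pos ⟨.s1, trivial⟩ < emb.pos x := by
        intro x hx1 hx2
        exact htwo x (fun he => hx2 (congrArg Subtype.val he))
          (fun he => hx1 (congrArg Subtype.val he))
      have hmin := hmin0 emb (emb.pos ⟨.s1, trivial⟩) le_rfl hm1m2.le hall
      have htwo' : ∀ x : DLVert ℓ, x ≠ ⟨.s2, trivial⟩ → x ≠ ⟨.s1, trivial⟩ →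
          emb.pos ⟨.s1, trivial⟩ < emb.pos x := htwo
      obtain ⟨r1, r2, r3, r4⟩ := engine_base emb ⟨.s2, trivial⟩ ⟨.s1, trivial⟩
        ⟨.w 0, Nat.zero_le ℓ⟩ ⟨.v 0, Nat.zero_le ℓ⟩ ⟨.u 0, Nat.zero_le ℓ⟩
        ⟨.v 1, hl⟩ ⟨.u 1, hl⟩ ⟨.u 1, hl⟩ eps eps
        Es2w Es2v Es1v Es1u Ewv0 Evv0 Evu0 Euu0 hue hve
        (fun hne => absurd rfl hne)
        (fun x hx => Or.inl (houtU0 x hx)) (fun x hx => (houtV0 x hx).symm)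
        hm1m2 htwo' (fun x hx h1 h2 h3 => hmin x hx h3 h2 h1)
        (vne (by simp)) (vne (by simp)) (vne (by simp)) (vne (by simp))
        (vne (by simp)) (vne (by simp)) (vne (by simp)) (vne (by simp))
        (vne (by simp)) (vne (by simp))
      exact Or.inl ⟨⟨r1, r3⟩, ⟨r2, r4⟩⟩
    · -- second smallest is w 0 : impossible
      rw [h] at htwo hm1m2
      exact absurd (kill_s2w0 emb hl hm1m2 htwo) id

lemma master : ∀ (i : ℕ) (h : i < ℓ),
    (emb.Consec ⟨.u i, h.le⟩ ⟨.v i, h.le⟩ ∧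
      emb.Consec ⟨.v i, h.le⟩ ⟨.w i, h.le⟩) ∨
    (emb.Consec ⟨.w i, h.le⟩ ⟨.v i, h.le⟩ ∧
      emb.Consec ⟨.v i, h.le⟩ ⟨.u i, h.le⟩) := by
  intro i
  induction i with
  | zero => intro h; exact base0 emb h
  | succ n ih =>
    intro h
    have hn : n < ℓ := by omega
    rcases ih hn with ⟨h1, h2⟩ | ⟨h1, h2⟩
    · exact Or.inr ((step_pos emb n hn h1 h2).1)
    · exact Or.inl ((step_neg emb n hn h1 h2).1)

end DLP


/-- in every 2-page book embedding of the double ladder of length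
`ℓ`, for each `i < ℓ` the spine order contains one of the two patterns
`[… u_i v_i w_i … w_{i+1} v_{i+1} u_{i+1} …]` or
`[… w_i v_i u_i … u_{i+1} v_{i+1} w_{i+1} …]`,
each triple occupying three consecutive positions, with all of the `i`-th triple
preceding all of the `(i+1)`-th triple. -/
theorem doubleLadder_pattern (ℓ : ℕ)
    (emb : TwoPageEmbedding (DLVert ℓ) (DLEdge ℓ)) :
    ∀ i : ℕ, ∀ h : i < ℓ,
      (emb.Consec (DLu ℓ i h.le) (DLv ℓ i h.le) ∧
       emb.Consec (DLv ℓ i h.le) (DLw ℓ i h.le) ∧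
       emb.Consec (DLw ℓ (i + 1) h) (DLv ℓ (i + 1) h) ∧
       emb.Consec (DLv ℓ (i + 1) h) (DLu ℓ (i + 1) h) ∧
       TripleBefore emb i (i + 1)) ∨
      (emb.Consec (DLw ℓ i h.le) (DLv ℓ i h.le) ∧
       emb.Consec (DLv ℓ i h.le) (DLu ℓ i h.le) ∧
       emb.Consec (DLu ℓ (i + 1) h) (DLv ℓ (i + 1) h) ∧
       emb.Consec (DLv ℓ (i + 1) h) (DLw ℓ (i + 1) h) ∧
       TripleBefore emb i (i + 1)) := by
  intro i h
  rcases DLP.master emb i h with ⟨h1, h2⟩ | ⟨h1, h2⟩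
  · left
    obtain ⟨⟨c1, c2⟩, hb1, hb2, hb3⟩ := DLP.step_pos emb i h h1 h2
    refine ⟨h1, h2, c1, c2, ?_⟩
    intro x y hx hy
    have o12 := h1.1
    have o23 := h2.1
    have hxle : emb.pos x ≤ emb.pos ⟨.w i, h.le⟩ := by
      rcases hx with hv | hv | hv <;> rw [DLP.vext x hv] <;> omega
    have hyge : emb.pos ⟨.w i, h.le⟩ < emb.pos y := by
      rcases hy with hv | hv | hv <;> rw [DLP.vext y hv] <;> omega
    omega
  · right
    obtain ⟨⟨c1, c2⟩, hb1, hb2, hb3⟩ := DLP.step_neg emb i h h1 h2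
    refine ⟨h1, h2, c1, c2, ?_⟩
    intro x y hx hy
    have o12 := h1.1
    have o23 := h2.1
    have hxle : emb.pos x ≤ emb.pos ⟨.u i, h.le⟩ := by
      rcases hx with hv | hv | hv <;> rw [DLP.vext x hv] <;> omega
    have hyge : emb.pos ⟨.u i, h.le⟩ < emb.pos y := by
      rcases hy with hv | hv | hv <;> rw [DLP.vext y hv] <;> omega
    omega
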